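/- arXiv:2308.07245 — 9 statements merged into one kernel-verified Lean document; each statement's English description precedes it below -/
import Mathlib

section
/- ϑ(x) ~ π(x)·log(x) as x → ∞, i.e., lim_{x→∞} ϑ(x)/(π(x)·log x) = 1. -/
open Finset Filter Real Asymptotics

noncomputable def primesUpTo (x : ℝ) : Finset ℕ := (Finset.Icc 1 ⌊x⌋₊).filter Nat.Prime

noncomputable def cheTheta (x : ℝ) : ℝ := ∑ p ∈ primesUpTo x, Real.log p

noncomputable def chePsi (x : ℝ) : ℝ := ∑ n ∈ Finset.Icc 1 ⌊x⌋₊, ArithmeticFunction.vonMangoldt n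

noncomputable def primePi (x : ℝ) : ℕ := (primesUpTo x).card

noncomputable def selTheta (x : ℝ) (n : ℕ) : ℝ :=
  ∑ d ∈ n.divisors, (ArithmeticFunction.moebius d : ℝ) * (Real.log (x / d)) ^ 2


lemma primesUpTo_mono {x y : ℝ} (h : x ≤ y) : primesUpTo x ⊆ primesUpTo y :=
  Finset.filter_subset_filter _ (Finset.Icc_subset_Icc le_rfl (Nat.floor_le_floor h))

lemma primesUpTo_natCast (n : ℕ) : primesUpTo (n : ℝ) = (Finset.Icc 1 n).filter Nat.Prime := by
  simp [primesUpTo]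

lemma centralBinom_le_pow (n : ℕ) :
    Nat.centralBinom n ≤ (2*n) ^ ((Finset.Icc 1 (2*n)).filter Nat.Prime).card := by
  rcases Nat.eq_zero_or_pos n with rfl | hn
  · simp [Nat.centralBinom]
  have h0 : Nat.centralBinom n ≠ 0 := (Nat.centralBinom_pos n).ne'
  have hsub : (Nat.centralBinom n).primeFactors ⊆ (Finset.Icc 1 (2*n)).filter Nat.Prime := by
    intro p hp
    have hp' := Nat.prime_of_mem_primeFactors hp
    have hpos : 0 < (Nat.centralBinom n).factorization p :=
      Nat.Prime.factorization_pos_of_dvd hp' h0 (Nat.dvd_of_mem_primeFactors hp)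
    have hle : p ≤ 2*n := Nat.le_two_mul_of_factorization_centralBinom_pos hpos
    simp [Finset.mem_Icc, hp', hp'.one_lt.le, hle]
  calc Nat.centralBinom n
      = ∏ p ∈ (Nat.centralBinom n).primeFactors, p ^ (Nat.centralBinom n).factorization p := by
        conv_lhs => rw [← Nat.factorization_prod_pow_eq_self h0]
        rw [Nat.prod_factorization_eq_prod_primeFactors]
    _ ≤ ∏ _p ∈ (Nat.centralBinom n).primeFactors, (2*n) := by
        apply Finset.prod_le_prod'
        intro p _
        exact Nat.pow_factorization_choose_le (by omega)
    _ = (2*n) ^ (Nat.centralBinom n).primeFactors.card := by rw [Finset.prod_const]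
    _ ≤ (2*n) ^ ((Finset.Icc 1 (2*n)).filter Nat.Prime).card :=
        Nat.pow_le_pow_right (by omega) (Finset.card_le_card hsub)

lemma cheb : ∀ᶠ x : ℝ in atTop, x / 2 ≤ (primePi x : ℝ) * Real.log x := by
  have hlog : ∀ᶠ x : ℝ in atTop, |Real.log x| ≤ (1/10) * |x| :=
    (Real.isLittleO_log_id_atTop.def (c := 1/10) (by norm_num)).mono (by intro x h; simpa using h)
  filter_upwards [hlog, eventually_ge_atTop (80:ℝ)] with x hlx hx
  have hx0 : (0:ℝ) < x := by linarith
  set n : ℕ := ⌊x/2⌋₊ with hn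
  have hn4 : 4 ≤ n := Nat.le_floor (by push_cast; linarith)
  have hnx : (n:ℝ) ≤ x/2 := Nat.floor_le (by linarith)
  have hnx' : x/2 - 1 ≤ (n:ℝ) := le_of_lt (Nat.sub_one_lt_floor _)
  -- nat inequality
  have key : (4:ℕ) ^ n ≤ n * (2*n) ^ ((Finset.Icc 1 (2*n)).filter Nat.Prime).card :=
    le_trans (Nat.four_pow_lt_mul_centralBinom n hn4).le
      (mul_le_mul_right (centralBinom_le_pow n) n)
  set k : ℕ := ((Finset.Icc 1 (2*n)).filter Nat.Prime).card with hk
  have keyR : (4:ℝ) ^ n ≤ (n:ℝ) * (2*n:ℝ) ^ k := by exact_mod_cast key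
  have h2n : (8:ℝ) ≤ (2*n:ℝ) := by push_cast; linarith [hnx']
  have hnpos : (0:ℝ) < n := by positivity
  have hlog4 : (n:ℝ) * Real.log 4 ≤ Real.log n + k * Real.log (2*n) := by
    have := Real.log_le_log (by positivity) keyR
    rw [Real.log_pow, Real.log_mul (by positivity) (by positivity), Real.log_pow] at this
    push_cast at this ⊢
    linarith
  -- primePi x ≥ k and log x ≥ log (2n)
  have hsub : ((Finset.Icc 1 (2*n)).filter Nat.Prime) ⊆ primesUpTo x := by
    rw [← primesUpTo_natCast]
    exact primesUpTo_mono (by push_cast; linarith)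
  have hkpi : (k:ℝ) ≤ (primePi x : ℝ) := by
    exact_mod_cast Finset.card_le_card hsub
  have hlog2n : (0:ℝ) < Real.log (2*n) := Real.log_pos (by push_cast; linarith)
  have hlogx : Real.log (2*n) ≤ Real.log x := Real.log_le_log (by positivity) (by push_cast; linarith)
  have hmain : (k:ℝ) * Real.log (2*n) ≤ (primePi x : ℝ) * Real.log x := by
    apply mul_le_mul hkpi hlogx hlog2n.le (by positivity)
  -- logs bounds
  have hln : Real.log n ≤ Real.log x := Real.log_le_log hnpos (by linarith)
  have hlxb : Real.log x ≤ x/10 := by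
    rw [abs_of_pos hx0] at hlx
    calc Real.log x ≤ |Real.log x| := le_abs_self _
    _ ≤ (1/10)*x := hlx
    _ = x/10 := by ring
  have hl2 : (0.6931471803 : ℝ) < Real.log 2 := Real.log_two_gt_d9
  have hlog4' : Real.log 4 = 2 * Real.log 2 := by
    rw [show (4:ℝ) = 2^2 by norm_num, Real.log_pow]; push_cast; ring
  nlinarith [hmain, hlog4, hln, hnx']



lemma cheTheta_le {x : ℝ} (hx : 2 ≤ x) : cheTheta x ≤ (primePi x : ℝ) * Real.log x := by
  have : ∀ p ∈ primesUpTo x, Real.log p ≤ Real.log x := by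
    intro p hp
    rw [primesUpTo, Finset.mem_filter, Finset.mem_Icc] at hp
    have h1 : (1:ℝ) ≤ p := by exact_mod_cast hp.1.1
    have h2 : (p:ℝ) ≤ x := le_trans (by exact_mod_cast hp.1.2) (Nat.floor_le (by linarith))
    exact Real.log_le_log (by linarith) h2
  calc cheTheta x ≤ ∑ _p ∈ primesUpTo x, Real.log x := Finset.sum_le_sum this
    _ = (primePi x : ℝ) * Real.log x := by rw [Finset.sum_const, primePi, nsmul_eq_mul]

lemma primePi_pos {x : ℝ} (hx : 2 ≤ x) : 0 < primePi x := by
  rw [primePi, Finset.card_pos]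
  exact ⟨2, by simp [primesUpTo, Finset.mem_Icc, Nat.prime_two, Nat.le_floor (by exact_mod_cast hx : (2:ℝ) ≤ x)]⟩

lemma cheTheta_lower {x ε : ℝ} (hx : 2 ≤ x) (hε0 : 0 < ε) (hε1 : ε < 1) :
    (1 - ε) * Real.log x * ((primePi x : ℝ) - x ^ (1 - ε)) ≤ cheTheta x := by
  have hx0 : (0:ℝ) < x := by linarith
  set y : ℝ := x ^ (1 - ε) with hy
  have hy0 : 0 < y := Real.rpow_pos_of_pos hx0 _
  set S := primesUpTo x with hS
  set T := S.filter (fun p => y < (p:ℕ)) with hT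
  have h1 : ∀ p ∈ T, (1 - ε) * Real.log x ≤ Real.log p := by
    intro p hp
    rw [hT, Finset.mem_filter] at hp
    have : Real.log y ≤ Real.log p := Real.log_le_log hy0 hp.2.le
    rwa [hy, Real.log_rpow hx0] at this
  have h2 : (T.card : ℝ) * ((1 - ε) * Real.log x) ≤ ∑ p ∈ T, Real.log p := by
    rw [← nsmul_eq_mul]
    exact Finset.card_nsmul_le_sum T _ _ h1
  have h3 : ∑ p ∈ T, Real.log p ≤ cheTheta x := by
    apply Finset.sum_le_sum_of_subset_of_nonneg (Finset.filter_subset _ _)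
    intro p hp _
    rw [hS, primesUpTo, Finset.mem_filter] at hp
    exact Real.log_nonneg (by exact_mod_cast hp.2.one_lt.le)
  -- card bound : S.card - T.card ≤ y
  have h4 : ((S.card - T.card : ℕ) : ℝ) ≤ y := by
    have hcard : T.card + (S.filter (fun p => ¬ y < (p:ℕ))).card = S.card :=
      Finset.card_filter_add_card_filter_not _
    have hsub : S.filter (fun p => ¬ y < (p:ℕ)) ⊆ Finset.Icc 1 ⌊y⌋₊ := by
      intro p hp
      rw [Finset.mem_filter, hS, primesUpTo, Finset.mem_filter, Finset.mem_Icc] at hp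
      rw [Finset.mem_Icc]
      exact ⟨hp.1.1.1, Nat.le_floor (not_lt.mp hp.2)⟩
    have := Finset.card_le_card hsub
    rw [Nat.card_Icc] at this
    have h5 : S.card - T.card ≤ ⌊y⌋₊ := by omega
    calc ((S.card - T.card : ℕ) : ℝ) ≤ (⌊y⌋₊ : ℝ) := by exact_mod_cast h5
      _ ≤ y := Nat.floor_le hy0.le
  have hTS : T.card ≤ S.card := Finset.card_le_card (Finset.filter_subset _ _)
  have h6 : (S.card : ℝ) - y ≤ (T.card : ℝ) := by
    rw [Nat.cast_sub hTS] at h4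
    linarith
  have hnn : 0 ≤ (1 - ε) * Real.log x := by
    have : 0 ≤ Real.log x := Real.log_nonneg (by linarith)
    exact mul_nonneg (by linarith) this
  calc (1 - ε) * Real.log x * ((primePi x : ℝ) - y)
      ≤ (1 - ε) * Real.log x * (T.card : ℝ) := by
        apply mul_le_mul_of_nonneg_left _ hnn
        exact h6
    _ = (T.card : ℝ) * ((1 - ε) * Real.log x) := by ring
    _ ≤ ∑ p ∈ T, Real.log p := h2
    _ ≤ cheTheta x := h3

theorem stmt_1 :
    Tendsto (fun x : ℝ => cheTheta x / (primePi x * Real.log x)) atTop (nhds 1) := by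
  rw [tendsto_order]
  constructor
  · intro a ha
    set b := max a 0 with hb
    have hb1 : b < 1 := max_lt ha one_pos
    have hb0 : 0 ≤ b := le_max_right _ _
    set ε := (1 - b) / 2 with hε
    have hε0 : 0 < ε := by rw [hε]; linarith
    have hε1 : ε < 1 := by rw [hε]; linarith
    have hquot : Tendsto (fun x : ℝ => x ^ (1-ε) / (primePi x : ℝ)) atTop (nhds 0) := by
      have hlosq : Tendsto (fun x : ℝ => 2 * (Real.log x / x ^ ε)) atTop (nhds 0) := by
        have h := (isLittleO_log_rpow_atTop hε0).tendsto_div_nhds_zero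
        simpa using h.const_mul 2
      apply squeeze_zero' ?_ ?_ hlosq
      · filter_upwards [eventually_ge_atTop (2:ℝ)] with x hx
        have hx0 : (0:ℝ) < x := by linarith
        have hπ : (0:ℝ) < (primePi x : ℝ) := by exact_mod_cast primePi_pos hx
        positivity
      · filter_upwards [cheb, eventually_ge_atTop (2:ℝ)] with x hc hx
        have hx0 : (0:ℝ) < x := by linarith
        have hπ : (0:ℝ) < (primePi x : ℝ) := by exact_mod_cast primePi_pos hx
        have hxe : (0:ℝ) < x ^ ε := Real.rpow_pos_of_pos hx0 _
        have key : x ≤ 2 * Real.log x * (primePi x : ℝ) := by nlinarith [hc]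
        rw [div_le_iff₀ hπ]
        have heq : 2 * (Real.log x / x ^ ε) * (primePi x : ℝ)
            = (2 * Real.log x * (primePi x:ℝ)) / x ^ ε := by ring
        rw [heq, le_div_iff₀ hxe]
        calc x ^ (1-ε) * x ^ ε = x := by
              rw [← Real.rpow_add hx0, sub_add_cancel, Real.rpow_one]
          _ ≤ _ := key
    have hg : Tendsto (fun x : ℝ => (1-ε) * (1 - x ^ (1-ε) / (primePi x : ℝ)))
        atTop (nhds (1-ε)) := by
      have h1 : Tendsto (fun x : ℝ => 1 - x ^ (1-ε) / (primePi x : ℝ)) atTop (nhds 1) := by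
        simpa using hquot.const_sub 1
      simpa using h1.const_mul (1-ε)
    have ha' : a < 1 - ε := by
      have : a ≤ b := le_max_left _ _
      rw [hε]; linarith
    have hev := hg.eventually (eventually_gt_nhds ha')
    filter_upwards [hev, eventually_ge_atTop (2:ℝ)] with x hgx hx
    refine hgx.trans_le ?_
    have hπ : (0:ℝ) < (primePi x : ℝ) := by exact_mod_cast primePi_pos hx
    have hlx : 0 < Real.log x := Real.log_pos (by linarith)
    have hlow := cheTheta_lower hx hε0 hε1
    rw [le_div_iff₀ (by positivity)]
    have heq : (1-ε)*(1 - x^(1-ε)/(primePi x:ℝ)) * ((primePi x:ℝ)*Real.log x)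
        = (1-ε)*Real.log x*((primePi x:ℝ) - x^(1-ε)) := by
      field_simp
    rw [heq]
    exact hlow
  · intro a ha
    filter_upwards [eventually_ge_atTop (2:ℝ)] with x hx
    have hπ : (0:ℝ) < (primePi x : ℝ) := by exact_mod_cast primePi_pos hx
    have hlx : 0 < Real.log x := Real.log_pos (by linarith)
    have h1 : cheTheta x / ((primePi x:ℝ) * Real.log x) ≤ 1 :=
      (div_le_one (by positivity)).mpr (cheTheta_le hx)
    linarith
end

section
/- The statement ϑ(x) ~ x (as x → ∞) implies the Prime Number Theorem π(x) ~ x/log(x), and conversely. -/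
open Finset Filter Real Asymptotics

lemma mem_primesUpTo' {x : ℝ} {p : ℕ} (hp : p ∈ primesUpTo x) :
    1 ≤ p ∧ p ≤ ⌊x⌋₊ ∧ p.Prime := by
  simp only [primesUpTo, Finset.mem_filter, Finset.mem_Icc] at hp
  tauto

lemma cheTheta_nonneg (x : ℝ) : 0 ≤ cheTheta x :=
  Finset.sum_nonneg fun p hp => Real.log_nonneg (by exact_mod_cast (mem_primesUpTo' hp).1)

lemma pnt_aux1 (x : ℝ) (hx : 2 ≤ x) :
    cheTheta x / x ≤ (primePi x : ℝ) / (x / Real.log x) := by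
  have hx0 : (0 : ℝ) < x := by linarith
  have hlog : 0 < Real.log x := Real.log_pos (by linarith)
  rw [div_div_eq_mul_div]
  have hnum : cheTheta x ≤ (primePi x : ℝ) * Real.log x := by
    have hb : ∀ p ∈ primesUpTo x, Real.log p ≤ Real.log x := by
      intro p hp
      obtain ⟨h1p, h2p, _⟩ := mem_primesUpTo' hp
      have hple : (p : ℝ) ≤ x := le_trans (Nat.cast_le.mpr h2p) (Nat.floor_le (by linarith))
      have hp1 : (1 : ℝ) ≤ (p : ℝ) := by exact_mod_cast h1p
      exact Real.log_le_log (by linarith) hple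
    calc cheTheta x ≤ (primesUpTo x).card • Real.log x := Finset.sum_le_card_nsmul _ _ _ hb
      _ = (primePi x : ℝ) * Real.log x := by rw [nsmul_eq_mul]; rfl
  exact div_le_div_of_nonneg_right hnum hx0.le |>.trans_eq rfl

lemma pnt_aux2 (ε : ℝ) (hε0 : 0 < ε) (hε1 : ε < 1) (x : ℝ) (hx : 2 ≤ x) :
    (primePi x : ℝ) / (x / Real.log x) ≤ (cheTheta x / x) / (1 - ε) + Real.log x / x ^ ε := by
  have hx0 : (0 : ℝ) < x := by linarith
  have hlog : 0 < Real.log x := Real.log_pos (by linarith)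
  set y : ℝ := x ^ (1 - ε) with hy
  have hy1 : 1 ≤ y := Real.one_le_rpow (by linarith) (by linarith)
  have hy0 : 0 < y := by linarith
  set T := (primesUpTo x).filter (fun p : ℕ => (p : ℝ) ≤ y) with hT
  set U := (primesUpTo x).filter (fun p : ℕ => ¬ (p : ℝ) ≤ y) with hU
  have hcard : T.card + U.card = primePi x :=
    Finset.card_filter_add_card_filter_not _
  -- bound card T
  have hTsub : T ⊆ Finset.Icc 1 ⌊y⌋₊ := by
    intro p hp
    rw [hT, Finset.mem_filter] at hp
    obtain ⟨h1p, _, _⟩ := mem_primesUpTo' hp.1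
    exact Finset.mem_Icc.mpr ⟨h1p, Nat.le_floor hp.2⟩
  have hcardT : (T.card : ℝ) ≤ y := by
    have h1 : T.card ≤ ⌊y⌋₊ := by
      have := Finset.card_le_card hTsub
      rwa [Nat.card_Icc, Nat.add_sub_cancel] at this
    calc (T.card : ℝ) ≤ (⌊y⌋₊ : ℝ) := by exact_mod_cast h1
      _ ≤ y := Nat.floor_le hy0.le
  -- bound card U
  have hUsum : (U.card : ℝ) * ((1 - ε) * Real.log x) ≤ cheTheta x := by
    have hb : ∀ p ∈ U, (1 - ε) * Real.log x ≤ Real.log p := by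
      intro p hp
      rw [hU, Finset.mem_filter, not_le] at hp
      calc (1 - ε) * Real.log x = Real.log y := (Real.log_rpow hx0 _).symm
        _ ≤ Real.log p := Real.log_le_log hy0 hp.2.le
    calc (U.card : ℝ) * ((1 - ε) * Real.log x)
        = U.card • ((1 - ε) * Real.log x) := (nsmul_eq_mul _ _).symm
      _ ≤ ∑ p ∈ U, Real.log p := Finset.card_nsmul_le_sum U _ _ hb
      _ ≤ cheTheta x := Finset.sum_le_sum_of_subset_of_nonneg (Finset.filter_subset _ _)
          (fun p hp _ => Real.log_nonneg (by exact_mod_cast (mem_primesUpTo' hp).1))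
  have hpos : 0 < (1 - ε) * Real.log x := mul_pos (by linarith) hlog
  have hcardU : (U.card : ℝ) ≤ cheTheta x / ((1 - ε) * Real.log x) :=
    (le_div_iff₀ hpos).mpr hUsum
  have hπ : (primePi x : ℝ) ≤ y + cheTheta x / ((1 - ε) * Real.log x) := by
    have hc : (primePi x : ℝ) = (T.card : ℝ) + (U.card : ℝ) := by exact_mod_cast hcard.symm
    rw [hc]; linarith
  rw [div_div_eq_mul_div]
  have hxε : (0 : ℝ) < x ^ ε := Real.rpow_pos_of_pos hx0 _
  have hyx : y = x / x ^ ε := by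
    rw [hy, Real.rpow_sub hx0, Real.rpow_one]
  have step : (primePi x : ℝ) * Real.log x / x
      ≤ (y + cheTheta x / ((1 - ε) * Real.log x)) * Real.log x / x := by
    gcongr
  refine step.trans (le_of_eq ?_)
  rw [hyx]
  have h1ε : (1 : ℝ) - ε ≠ 0 := by linarith
  field_simp
  ring

lemma pnt_diff_tendsto (hb : ∀ᶠ x : ℝ in atTop, cheTheta x / x ≤ 2) :
    Tendsto (fun x : ℝ => (primePi x : ℝ) / (x / Real.log x) - cheTheta x / x)
      atTop (nhds 0) := by
  rw [NormedAddCommGroup.tendsto_nhds_zero]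
  intro ε₀ hε₀
  set ε := min (1 / 2 : ℝ) (ε₀ / 8) with hε
  have hε0 : 0 < ε := lt_min (by norm_num) (by linarith)
  have hεhalf : ε ≤ 1 / 2 := min_le_left _ _
  have hε8 : ε ≤ ε₀ / 8 := min_le_right _ _
  have hL : Tendsto (fun x : ℝ => Real.log x / x ^ ε) atTop (nhds 0) :=
    (isLittleO_log_rpow_atTop hε0).tendsto_div_nhds_zero
  filter_upwards [hb, eventually_ge_atTop (2 : ℝ),
    hL.eventually_lt_const (show (0 : ℝ) < ε₀ / 4 by linarith)] with x hf hx hLx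
  have hfg := pnt_aux1 x hx
  have hgf := pnt_aux2 ε hε0 (by linarith) x hx
  set f := cheTheta x / x with hfdef
  set g := (primePi x : ℝ) / (x / Real.log x) with hgdef
  have hf0 : 0 ≤ f := div_nonneg (cheTheta_nonneg x) (by linarith)
  have hdiv : f / (1 - ε) ≤ f + 4 * ε := by
    rw [div_le_iff₀ (by linarith)]
    nlinarith
  rw [Real.norm_eq_abs, abs_lt]
  constructor <;> nlinarith

theorem stmt_2 :
    Tendsto (fun x : ℝ => cheTheta x / x) atTop (nhds 1) ↔
      Tendsto (fun x : ℝ => primePi x / (x / Real.log x)) atTop (nhds 1) := by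
  constructor
  · intro h
    have hb : ∀ᶠ x : ℝ in atTop, cheTheta x / x ≤ 2 :=
      h.eventually_le_const one_lt_two
    have hd := pnt_diff_tendsto hb
    have hsum := h.add hd
    rw [add_zero] at hsum
    refine hsum.congr fun x => ?_
    ring
  · intro h
    have hg2 : ∀ᶠ x : ℝ in atTop, (primePi x : ℝ) / (x / Real.log x) ≤ 2 :=
      h.eventually_le_const one_lt_two
    have hb : ∀ᶠ x : ℝ in atTop, cheTheta x / x ≤ 2 := by
      filter_upwards [hg2, eventually_ge_atTop (2 : ℝ)] with x h2x hx
      exact (pnt_aux1 x hx).trans h2x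
    have hd := pnt_diff_tendsto hb
    have hsub := h.sub hd
    rw [sub_zero] at hsub
    refine hsub.congr fun x => ?_
    ring
end

section
/- Let x > 0, λ_d = μ(d)·log²(x/d), and θ_n = ∑_{d | n} λ_d. If n = p^α · q^β with p, q distinct primes and α, β ≥ 1, then θ_n = 2·log(p)·log(q). -/
open Finset Filter Real Asymptotics

theorem stmt_6 (x : ℝ) (hx : 0 < x) (p q α β : ℕ) (hp : p.Prime) (hq : q.Prime)
    (hpq : p ≠ q) (hα : 1 ≤ α) (hβ : 1 ≤ β) :
    selTheta x (p ^ α * q ^ β) = 2 * Real.log p * Real.log q := by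
  have hcop : Nat.Coprime p q := (Nat.coprime_primes hp hq).mpr hpq
  have hN : p ^ α * q ^ β ≠ 0 := Nat.mul_ne_zero (pow_ne_zero _ hp.pos.ne') (pow_ne_zero _ hq.pos.ne')
  have hsub : (p * q).divisors ⊆ (p ^ α * q ^ β).divisors := by
    apply Nat.divisors_subset_of_dvd hN
    exact mul_dvd_mul (dvd_pow_self p (by omega)) (dvd_pow_self q (by omega))
  have hstep : selTheta x (p ^ α * q ^ β) = selTheta x (p * q) := by
    unfold selTheta
    rw [← Finset.sum_subset hsub]
    intro d hd hnd
    have hdvd : d ∣ p ^ α * q ^ β := Nat.dvd_of_mem_divisors hd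
    have hd0 : d ≠ 0 := ne_zero_of_dvd_ne_zero hN hdvd
    have hsq : ¬ Squarefree d := by
      intro hsq
      obtain ⟨a, b, ha, hb, rfl⟩ := exists_dvd_and_dvd_of_dvd_mul hdvd
      have hsa : Squarefree a := hsq.squarefree_of_dvd (dvd_mul_right a b)
      have hsb : Squarefree b := hsq.squarefree_of_dvd (dvd_mul_left b a)
      have hap : a ∣ p := (hsa.dvd_pow_iff_dvd (by omega)).mp ha
      have hbq : b ∣ q := (hsb.dvd_pow_iff_dvd (by omega)).mp hb
      exact hnd (Nat.mem_divisors.mpr ⟨mul_dvd_mul hap hbq, Nat.mul_ne_zero hp.pos.ne' hq.pos.ne'⟩)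
    rw [ArithmeticFunction.moebius_eq_zero_of_not_squarefree hsq]
    simp
  rw [hstep]
  unfold selTheta
  have hdiv : (p * q).divisors = {1, p, q, p * q} := by
    ext d
    simp only [Nat.mem_divisors, Finset.mem_insert, Finset.mem_singleton]
    constructor
    · rintro ⟨hdvd, -⟩
      obtain ⟨a, b, ha, hb, rfl⟩ := exists_dvd_and_dvd_of_dvd_mul hdvd
      rcases (Nat.dvd_prime hp).mp ha with rfl | rfl <;>
        rcases (Nat.dvd_prime hq).mp hb with rfl | rfl <;> simp
    · have h0 : p * q ≠ 0 := Nat.mul_ne_zero hp.pos.ne' hq.pos.ne'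
      rintro (rfl|rfl|rfl|rfl)
      exacts [⟨one_dvd _, h0⟩, ⟨dvd_mul_right _ _, h0⟩, ⟨dvd_mul_left _ _, h0⟩, ⟨dvd_rfl, h0⟩]
  have hp1 : p ≠ 1 := hp.one_lt.ne'
  have hq1 : q ≠ 1 := hq.one_lt.ne'
  have hpq1 : p * q ≠ 1 :=
    (lt_of_lt_of_le hp.one_lt (Nat.le_mul_of_pos_right _ hq.pos)).ne'
  have hppq : p ≠ p * q := by
    intro h
    nth_rewrite 1 [← mul_one p] at h
    exact hq1 ((Nat.mul_left_cancel hp.pos h).symm)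
  have hqpq : q ≠ p * q := by
    intro h
    nth_rewrite 1 [← one_mul q] at h
    exact hp1 ((Nat.mul_right_cancel hq.pos h).symm)
  rw [hdiv]
  rw [Finset.sum_insert (by simp [hp1.symm, hq1.symm, hpq1.symm]),
      Finset.sum_insert (by simp [hpq, hppq]),
      Finset.sum_insert (by simp [hqpq]), Finset.sum_singleton]
  have hμpq : ArithmeticFunction.moebius (p * q) = 1 := by
    rw [ArithmeticFunction.isMultiplicative_moebius.map_mul_of_coprime hcop,
      ArithmeticFunction.moebius_apply_prime hp, ArithmeticFunction.moebius_apply_prime hq]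
    ring
  rw [ArithmeticFunction.moebius_apply_one, ArithmeticFunction.moebius_apply_prime hp,
    ArithmeticFunction.moebius_apply_prime hq, hμpq]
  have hxne : x ≠ 0 := hx.ne'
  have hpne : (p : ℝ) ≠ 0 := Nat.cast_ne_zero.mpr hp.pos.ne'
  have hqne : (q : ℝ) ≠ 0 := Nat.cast_ne_zero.mpr hq.pos.ne'
  rw [Nat.cast_mul]
  rw [Real.log_div hxne hpne, Real.log_div hxne hqne,
    Real.log_div hxne (mul_ne_zero hpne hqne), Real.log_mul hpne hqne]
  simp
  ring
end

section
/- Let x > 0, λ_d = μ(d)·log²(x/d), and θ_n = ∑_{d | n} λ_d. If n has at least three distinct prime factors, then θ_n = 0. -/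
open Finset Filter Real Asymptotics

-- sum of signs over a powerset of a nonempty set is 0 (real version)
lemma aux0 (A : Finset ℕ) (hA : A.Nonempty) : ∑ S ∈ A.powerset, (-1:ℝ)^S.card = 0 := by
  have h := Finset.sum_powerset_neg_one_pow_card_of_nonempty hA
  exact_mod_cast congrArg (Int.cast : ℤ → ℝ) h

lemma aux1 (P T : Finset ℕ) (hT : T ⊆ P) (hne : T ≠ P) :
    ∑ S ∈ P.powerset.filter (fun S => T ⊆ S), (-1:ℝ)^S.card = 0 := by
  have himg : P.powerset.filter (fun S => T ⊆ S) = (P \ T).powerset.image (· ∪ T) := by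
    ext S
    simp only [mem_filter, mem_powerset, mem_image]
    constructor
    · rintro ⟨hSP, hTS⟩
      exact ⟨S \ T, sdiff_subset_sdiff hSP le_rfl, by rw [Finset.sdiff_union_of_subset hTS]⟩
    · rintro ⟨U, hU, rfl⟩
      exact ⟨union_subset ((hU.trans sdiff_subset)) hT, subset_union_right⟩
  have hinj : ∀ U1 ∈ (P \ T).powerset, ∀ U2 ∈ (P \ T).powerset, U1 ∪ T = U2 ∪ T → U1 = U2 := by
    intro U1 h1 U2 h2 h
    rw [mem_powerset] at h1 h2
    have d1 : Disjoint U1 T := sdiff_disjoint.mono_left h1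
    have d2 : Disjoint U2 T := sdiff_disjoint.mono_left h2
    rw [← Finset.union_sdiff_cancel_right d1, h, Finset.union_sdiff_cancel_right d2]
  rw [himg, Finset.sum_image hinj]
  have : ∀ U ∈ (P \ T).powerset, (-1:ℝ)^(U ∪ T).card = (-1:ℝ)^T.card * (-1:ℝ)^U.card := by
    intro U hU
    rw [mem_powerset] at hU
    rw [Finset.card_union_of_disjoint (sdiff_disjoint.mono_left hU), pow_add, mul_comm]
  rw [Finset.sum_congr rfl this, ← mul_sum, aux0 _ (by
    rw [Finset.sdiff_nonempty]; exact fun h => hne (subset_antisymm hT h)), mul_zero]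

lemma L1 (P : Finset ℕ) (hP : 2 ≤ P.card) (c : ℕ → ℝ) :
    ∑ S ∈ P.powerset, (-1:ℝ)^S.card * (∑ p ∈ S, c p) = 0 := by
  have step : ∀ S ∈ P.powerset, (-1:ℝ)^S.card * (∑ p ∈ S, c p)
      = ∑ p ∈ P, (if p ∈ S then (-1:ℝ)^S.card * c p else 0) := by
    intro S hS
    rw [mem_powerset] at hS
    rw [← Finset.sum_filter]
    have : P.filter (· ∈ S) = S := by
      rw [Finset.filter_mem_eq_inter, inter_eq_right.mpr hS]
    rw [this, mul_sum]
  rw [Finset.sum_congr rfl step, Finset.sum_comm]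
  apply Finset.sum_eq_zero
  intro p hp
  rw [← Finset.sum_filter]
  have hfil : P.powerset.filter (fun S => p ∈ S) = P.powerset.filter (fun S => {p} ⊆ S) := by
    simp [Finset.singleton_subset_iff]
  calc ∑ S ∈ P.powerset.filter (fun S => p ∈ S), (-1:ℝ)^S.card * c p
      = (∑ S ∈ P.powerset.filter (fun S => {p} ⊆ S), (-1:ℝ)^S.card) * c p := by
        rw [hfil, Finset.sum_mul]
    _ = 0 := by
        rw [aux1 P {p} (Finset.singleton_subset_iff.mpr hp)
          (fun h => by simp [← h] at hP), zero_mul]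

lemma L2 (P : Finset ℕ) (hP : 3 ≤ P.card) (c d : ℕ → ℝ) :
    ∑ S ∈ P.powerset, (-1:ℝ)^S.card * ((∑ p ∈ S, c p) * (∑ q ∈ S, d q)) = 0 := by
  have step : ∀ S ∈ P.powerset, (-1:ℝ)^S.card * ((∑ p ∈ S, c p) * (∑ q ∈ S, d q))
      = ∑ p ∈ P, ∑ q ∈ P, (if p ∈ S ∧ q ∈ S then (-1:ℝ)^S.card * (c p * d q) else 0) := by
    intro S hS
    rw [mem_powerset] at hS
    have h1 : (∑ p ∈ S, c p) = ∑ p ∈ P, (if p ∈ S then c p else 0) := by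
      rw [← Finset.sum_filter, Finset.filter_mem_eq_inter, inter_eq_right.mpr hS]
    have h2 : (∑ q ∈ S, d q) = ∑ q ∈ P, (if q ∈ S then d q else 0) := by
      rw [← Finset.sum_filter, Finset.filter_mem_eq_inter, inter_eq_right.mpr hS]
    rw [h1, h2, Finset.sum_mul_sum, mul_sum]
    refine Finset.sum_congr rfl fun p _ => ?_
    rw [mul_sum]
    refine Finset.sum_congr rfl fun q _ => ?_
    by_cases hp : p ∈ S <;> by_cases hq : q ∈ S <;> simp [hp, hq]
  rw [Finset.sum_congr rfl step, Finset.sum_comm]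
  apply Finset.sum_eq_zero
  intro p hp
  rw [Finset.sum_comm]
  apply Finset.sum_eq_zero
  intro q hq
  rw [← Finset.sum_filter]
  have hfil : P.powerset.filter (fun S => p ∈ S ∧ q ∈ S)
      = P.powerset.filter (fun S => {p, q} ⊆ S) := by
    simp [Finset.insert_subset_iff, Finset.singleton_subset_iff]
  have hcard : ({p, q} : Finset ℕ).card ≤ 2 := Finset.card_insert_le _ _ |>.trans (by simp)
  calc ∑ S ∈ P.powerset.filter (fun S => p ∈ S ∧ q ∈ S), (-1:ℝ)^S.card * (c p * d q)
      = (∑ S ∈ P.powerset.filter (fun S => {p, q} ⊆ S), (-1:ℝ)^S.card) * (c p * d q) := by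
        rw [hfil, Finset.sum_mul]
    _ = 0 := by
        rw [aux1 P {p, q} (Finset.insert_subset_iff.mpr ⟨hp, Finset.singleton_subset_iff.mpr hq⟩)
          (fun h => by rw [← h] at hP; omega), zero_mul]

theorem stmt_7 (x : ℝ) (hx : 0 < x) (n : ℕ) (hn : 3 ≤ n.primeFactors.card) :
    selTheta x n = 0 := by
  classical
  have hn0 : n ≠ 0 := by rintro rfl; simp at hn
  set P := n.primeFactors with hPdef
  have hstep1 : selTheta x n
      = ∑ d ∈ n.divisors.filter Squarefree,
          (ArithmeticFunction.moebius d : ℝ) * (Real.log (x / d)) ^ 2 := by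
    rw [selTheta]
    refine (Finset.sum_filter_of_ne fun d _ h => ?_).symm
    by_contra hsq
    rw [ArithmeticFunction.moebius_eq_zero_of_not_squarefree hsq] at h
    simp at h
  have hstep2 : selTheta x n
      = ∑ S ∈ P.powerset,
          (ArithmeticFunction.moebius (∏ p ∈ S, p) : ℝ) * (Real.log (x / (∏ p ∈ S, p))) ^ 2 := by
    rw [hstep1, Nat.sum_divisors_filter_squarefree hn0, Nat.factors_eq]
    refine Finset.sum_congr (by simp [Nat.toFinset_factors, hPdef]) fun S _ => ?_
    rw [Finset.prod_val, Function.id_def]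
  rw [hstep2]
  have hterm : ∀ S ∈ P.powerset,
      (ArithmeticFunction.moebius (∏ p ∈ S, p) : ℝ) * (Real.log (x / (∏ p ∈ S, p))) ^ 2
      = (-1:ℝ)^S.card * (Real.log x - ∑ p ∈ S, Real.log p)^2 := by
    intro S hS
    rw [mem_powerset] at hS
    have hprime : ∀ p ∈ S, p.Prime := fun p hp => Nat.prime_of_mem_primeFactors (hS hp)
    have hμ : (ArithmeticFunction.moebius (∏ p ∈ S, p) : ℝ) = (-1:ℝ)^S.card := by
      rw [ArithmeticFunction.IsMultiplicative.map_prod_of_prime ArithmeticFunction.isMultiplicative_moebius S hprime]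
      push_cast
      rw [Finset.prod_congr rfl fun p hp =>
        congrArg (Int.cast : ℤ → ℝ) (ArithmeticFunction.moebius_apply_prime (hprime p hp))]
      simp
    have hprod0 : (∏ p ∈ S, p) ≠ 0 :=
      Finset.prod_ne_zero_iff.mpr fun p hp => (hprime p hp).ne_zero
    have hlog : Real.log (x / (∏ p ∈ S, p)) = Real.log x - ∑ p ∈ S, Real.log p := by
      rw [Real.log_div hx.ne' (by exact_mod_cast hprod0), Nat.cast_prod,
        Real.log_prod fun p hp => by exact_mod_cast (hprime p hp).ne_zero]
    rw [hμ, hlog]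
  rw [Finset.sum_congr rfl hterm]
  set a := Real.log x
  set c : ℕ → ℝ := fun p => Real.log p
  have expand : ∀ S ∈ P.powerset, (-1:ℝ)^S.card * (a - ∑ p ∈ S, c p)^2
      = a^2 * (-1:ℝ)^S.card - 2*a*((-1:ℝ)^S.card * (∑ p ∈ S, c p))
        + (-1:ℝ)^S.card * ((∑ p ∈ S, c p) * (∑ q ∈ S, c q)) := by
    intro S _; ring
  rw [Finset.sum_congr rfl expand, Finset.sum_add_distrib, Finset.sum_sub_distrib,
    ← Finset.mul_sum, ← Finset.mul_sum, aux0 P (Finset.card_pos.mp (by omega)),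
    L1 P (by omega) c, L2 P (by omega) c c]
  ring
end

section
/- (Mertens-type estimate) ∑_{p ≤ x, p prime} log(p)/p = log(x) + O(1). -/
open Finset Filter Real Asymptotics

open ArithmeticFunction

lemma sum_log_le (N : ℕ) : ∑ n ∈ Finset.Icc 1 N, Real.log n ≤ (N : ℝ) * Real.log N := by
  calc ∑ n ∈ Finset.Icc 1 N, Real.log n ≤ ∑ n ∈ Finset.Icc 1 N, Real.log N := by
        refine Finset.sum_le_sum fun n hn => ?_
        simp only [Finset.mem_Icc] at hn
        exact Real.log_le_log (by exact_mod_cast hn.1) (by exact_mod_cast hn.2)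
    _ = (N : ℝ) * Real.log N := by
        rw [Finset.sum_const, Nat.card_Icc]; simp [nsmul_eq_mul]

lemma sum_log_ge (N : ℕ) : (N : ℝ) * Real.log N - N ≤ ∑ n ∈ Finset.Icc 1 N, Real.log n := by
  induction N with
  | zero => simp
  | succ M ih =>
    rcases Nat.eq_zero_or_pos M with h | h
    · subst h; simp
    rw [Finset.sum_Icc_succ_top (by omega)]
    have key : ((M:ℝ)+1) * Real.log ((M:ℝ)+1) - (M:ℝ) * Real.log M ≤ Real.log ((M:ℝ)+1) + 1 := by
      have hM : (0:ℝ) < M := by exact_mod_cast h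
      have h1 : Real.log ((M+1)/M) ≤ (M+1)/M - 1 :=
        Real.log_le_sub_one_of_pos (by positivity)
      have h2 : Real.log ((M+1)/M) = Real.log (M+1) - Real.log M :=
        Real.log_div (by positivity) (ne_of_gt hM)
      have h3 : ((M:ℝ)+1)/M - 1 = 1/M := by field_simp; ring
      rw [h2, h3] at h1
      have : (M:ℝ) * (Real.log (M+1) - Real.log M) ≤ 1 := by
        have := (le_div_iff₀ hM).mp h1
        nlinarith [this]
      nlinarith [this]
    push_cast
    nlinarith [key, ih]

lemma sum_log_eq (N : ℕ) :
    ∑ n ∈ Finset.Icc 1 N, Real.log n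
      = ∑ d ∈ Finset.Icc 1 N, ArithmeticFunction.vonMangoldt d * (N / d : ℕ) := by
  have h1 : ∀ n ∈ Finset.Icc 1 N, Real.log n = ∑ d ∈ n.divisors, ArithmeticFunction.vonMangoldt d :=
    fun n _ => (ArithmeticFunction.vonMangoldt_sum).symm
  rw [Finset.sum_congr rfl h1]
  have h2 : ∀ n ∈ Finset.Icc 1 N,
      ∑ d ∈ n.divisors, ArithmeticFunction.vonMangoldt d
        = ∑ d ∈ (Finset.Icc 1 N).filter (· ∣ n), ArithmeticFunction.vonMangoldt d := by
    intro n hn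
    simp only [Finset.mem_Icc] at hn
    apply Finset.sum_congr _ fun _ _ => rfl
    ext d
    simp only [Nat.mem_divisors, Finset.mem_filter, Finset.mem_Icc]
    constructor
    · rintro ⟨hdn, hn0⟩
      exact ⟨⟨Nat.one_le_iff_ne_zero.2 (fun h => by subst h; simp at hdn; omega),
        le_trans (Nat.le_of_dvd (by omega) hdn) hn.2⟩, hdn⟩
    · rintro ⟨_, hdn⟩; exact ⟨hdn, by omega⟩
  rw [Finset.sum_congr rfl h2]
  simp only [Finset.sum_filter]
  rw [Finset.sum_comm]
  refine Finset.sum_congr rfl fun d hd => ?_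
  rw [← Finset.sum_filter (fun x => d ∣ x) (fun _ => ArithmeticFunction.vonMangoldt d), Finset.sum_const, nsmul_eq_mul, mul_comm]
  congr 1
  have : (Finset.Icc 1 N).filter (d ∣ ·) = (Finset.Ioc 0 N).filter (d ∣ ·) := by
    congr 1
  rw [this]
  exact_mod_cast congrArg (Nat.cast (R := ℝ)) (Nat.Ioc_filter_dvd_card_eq_div N d)

lemma theta_le (N : ℕ) :
    ∑ p ∈ (Finset.Icc 1 N).filter Nat.Prime, Real.log p ≤ (N : ℝ) * Real.log 4 := by
  have hset : (Finset.Icc 1 N).filter Nat.Prime = (Finset.range (N+1)).filter Nat.Prime := by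
    ext p
    simp only [Finset.mem_filter, Finset.mem_Icc, Finset.mem_range]
    exact ⟨fun ⟨⟨_, h2⟩, hp⟩ => ⟨by omega, hp⟩, fun ⟨h1, hp⟩ => ⟨⟨hp.one_lt.le.trans' (by omega) |>.trans (le_refl _) |>.trans (le_refl _), by omega⟩, hp⟩⟩
  rw [hset]
  have hpr : ∑ p ∈ (Finset.range (N+1)).filter Nat.Prime, Real.log p
      = Real.log (primorial N) := by
    rw [primorial]
    rw [Nat.cast_prod, Real.log_prod]
    intro p hp
    simp only [Finset.mem_filter] at hp
    exact_mod_cast hp.2.pos.ne'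
  rw [hpr]
  calc Real.log (primorial N) ≤ Real.log ((4:ℕ)^N) :=
        by
        have h4 : (primorial N : ℝ) ≤ ((4:ℕ):ℝ)^N := by exact_mod_cast primorial_le_4_pow N
        have hp0 : (0:ℝ) < primorial N := by exact_mod_cast primorial_pos N
        exact Real.log_le_log hp0 h4
    _ = (N : ℝ) * Real.log 4 := by
        push_cast
        rw [Real.log_pow]

lemma sum_image_le' {α β : Type*} [DecidableEq α] [DecidableEq β] (t : Finset α) (g : α → β) (f : β → ℝ)
    (hf : ∀ b, 0 ≤ f b) : ∑ b ∈ t.image g, f b ≤ ∑ a ∈ t, f (g a) := by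
  induction t using Finset.induction with
  | empty => simp
  | @insert a t ha ih =>
    rw [Finset.image_insert, Finset.sum_insert ha]
    by_cases h : g a ∈ t.image g
    · rw [Finset.insert_eq_self.2 h]
      linarith [ih, hf (g a)]
    · rw [Finset.sum_insert h]
      linarith [ih]

-- every n that is a non-prime prime power lands in the image
lemma S_subset (N : ℕ) :
    (Finset.Icc 1 N).filter (fun n => IsPrimePow n ∧ ¬ n.Prime) ⊆
      (((Finset.Icc 2 (Nat.sqrt N)).filter Nat.Prime) ×ˢ Finset.Icc 2 (Nat.log 2 N)).image
        (fun q => q.1 ^ q.2) := by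
  intro n hn
  simp only [Finset.mem_filter, Finset.mem_Icc, Finset.mem_image, Finset.mem_product] at hn ⊢
  obtain ⟨⟨hn1, hnN⟩, hpp, hnp⟩ := hn
  obtain ⟨p, k, hp, hk, rfl⟩ := (isPrimePow_nat_iff _).1 hpp
  have hk2 : 2 ≤ k := by
    by_contra h
    have hk1 : k = 1 := by omega
    subst hk1
    rw [pow_one] at hnp
    exact hnp hp
  refine ⟨⟨p, k⟩, ⟨⟨⟨hp.two_le, ?_⟩, hp⟩, hk2, ?_⟩, rfl⟩
  · -- p ≤ sqrt N since p^2 ≤ p^k ≤ N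
    have : p^2 ≤ p^k := Nat.pow_le_pow_right hp.pos hk2
    exact Nat.le_sqrt.2 (by nlinarith [hnN])
  · -- k ≤ log 2 N since 2^k ≤ p^k ≤ N
    have h2 : 2^k ≤ p^k := Nat.pow_le_pow_left hp.two_le k
    have hN0 : N ≠ 0 := by omega
    exact (Nat.le_log_iff_pow_le (by norm_num) hN0).2 (le_trans h2 hnN)

lemma log_le_two_sqrt {x : ℝ} (hx : 0 < x) : Real.log x ≤ 2 * Real.sqrt x := by
  have h1 : Real.log x = 2 * Real.log (Real.sqrt x) := by
    rw [Real.log_sqrt hx.le]; ring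
  rw [h1]
  have h2 : Real.log (Real.sqrt x) ≤ Real.sqrt x := (Real.log_le_sub_one_of_pos (Real.sqrt_pos.2 hx)).trans (by linarith)
  linarith

lemma telescope_sum (M : ℕ) (hM : 1 ≤ M) :
    ∑ m ∈ Finset.Icc 2 M, 1 / ((m : ℝ) * Real.sqrt m) ≤ 2 - 2 / Real.sqrt M := by
  induction M with
  | zero => omega
  | succ M ih =>
    rcases Nat.lt_or_ge M 1 with h | h
    · have : M = 0 := by omega
      subst this
      simp
    have key := ih h
    rw [Finset.sum_Icc_succ_top (by omega)]
    have ha : (0:ℝ) < Real.sqrt M := Real.sqrt_pos.2 (by exact_mod_cast h)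
    have hb : (0:ℝ) < Real.sqrt (M+1) := Real.sqrt_pos.2 (by positivity)
    have hab : Real.sqrt M ≤ Real.sqrt (M+1) := Real.sqrt_le_sqrt (by push_cast; linarith)
    have hb2 : (Real.sqrt (M+1))^2 = (M:ℝ)+1 := Real.sq_sqrt (by positivity)
    have ha2 : (Real.sqrt M)^2 = (M:ℝ) := Real.sq_sqrt (by positivity)
    set a := Real.sqrt M with hadef
    set b := Real.sqrt ((M:ℝ)+1) with hbdef
    have step : 1 / (((M:ℝ)+1) * b) ≤ 2 / a - 2 / b := by
      have hMb : ((M:ℝ)+1) = b^2 := hb2.symm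
      rw [hMb, div_sub_div _ _ (ne_of_gt ha) (ne_of_gt hb),
        div_le_div_iff₀ (by positivity) (by positivity)]
      have key2 : a*b*(a+b) ≤ 2*b^3 := by nlinarith [hab, ha, hb]
      have h3 : (b-a)*(b+a) = 1 := by nlinarith [ha2, hb2]
      have h4 : (0:ℝ) ≤ b - a := sub_nonneg.2 hab
      have h5 := mul_le_mul_of_nonneg_right key2 h4
      -- h5 : a*b*(a+b)*(b-a) ≤ 2*b^3*(b-a)
      have h6 : a*b*(a+b)*(b-a) = a*b := by
        have h7 : (a+b)*(b-a) = 1 := by linarith [h3]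
        linear_combination (a*b) * h7
      nlinarith [h5, h6]
    push_cast
    push_cast at key
    linarith [key, step]

lemma natlog_le {N : ℕ} (hN : 1 ≤ N) : (Nat.log 2 N : ℝ) ≤ 2 * Real.log N := by
  have h1 : (2:ℕ)^(Nat.log 2 N) ≤ N := Nat.pow_log_le_self 2 (by omega)
  have h2 : ((2:ℝ))^(Nat.log 2 N) ≤ (N:ℝ) := by exact_mod_cast h1
  have h3 : (Nat.log 2 N : ℝ) * Real.log 2 ≤ Real.log N := by
    rw [← Real.log_pow]
    exact Real.log_le_log (by positivity) h2
  have h4 : (0.6931471803 : ℝ) < Real.log 2 := Real.log_two_gt_d9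
  nlinarith [h3, h4, show (0:ℝ) ≤ (Nat.log 2 N : ℝ) by positivity]

-- log N ≤ 4 * N^(1/4), via sqrt of sqrt
lemma log_le_four {N : ℕ} (hN : 1 ≤ N) :
    Real.log N ≤ 4 * Real.sqrt (Real.sqrt N) ∧
    Real.sqrt (Real.sqrt N) * Real.sqrt (Real.sqrt N) = Real.sqrt N := by
  have hN0 : (0:ℝ) < N := by exact_mod_cast hN
  constructor
  · have h1 : Real.log N = 4 * Real.log (Real.sqrt (Real.sqrt N)) := by
      rw [Real.log_sqrt (Real.sqrt_nonneg _), Real.log_sqrt hN0.le]; ring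
    rw [h1]
    have := Real.log_le_sub_one_of_pos (x := Real.sqrt (Real.sqrt N)) (by positivity)
    linarith
  · exact Real.mul_self_sqrt (Real.sqrt_nonneg _)

lemma psi_le (N : ℕ) (hN : 1 ≤ N) :
    ∑ n ∈ Finset.Icc 1 N, ArithmeticFunction.vonMangoldt n ≤ 34 * (N : ℝ) := by
  rw [← Finset.sum_filter_add_sum_filter_not (Finset.Icc 1 N) Nat.Prime]
  have hth : ∑ p ∈ (Finset.Icc 1 N).filter Nat.Prime, ArithmeticFunction.vonMangoldt p
      ≤ (N : ℝ) * Real.log 4 := by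
    rw [Finset.sum_congr rfl (fun p hp => ArithmeticFunction.vonMangoldt_apply_prime
      (Finset.mem_filter.1 hp).2)]
    exact theta_le N
  have hnp : ∑ n ∈ (Finset.Icc 1 N).filter (fun n => ¬ n.Prime), ArithmeticFunction.vonMangoldt n
      ≤ 32 * (N : ℝ) := by
    -- restrict to prime powers
    have hsub : ∑ n ∈ (Finset.Icc 1 N).filter (fun n => ¬ n.Prime), ArithmeticFunction.vonMangoldt n
        = ∑ n ∈ (Finset.Icc 1 N).filter (fun n => IsPrimePow n ∧ ¬ n.Prime),
            ArithmeticFunction.vonMangoldt n := by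
      apply (Finset.sum_subset ?_ ?_).symm
      · intro n hn
        simp only [Finset.mem_filter] at hn ⊢
        exact ⟨hn.1, hn.2.2⟩
      · intro n hn hn2
        by_contra hne
        have hpp := ArithmeticFunction.vonMangoldt_ne_zero_iff.1 hne
        simp only [Finset.mem_filter] at hn hn2
        exact hn2 ⟨hn.1, hpp, hn.2⟩
    rw [hsub]
    have hle := Finset.sum_le_sum_of_subset_of_nonneg
      (f := ArithmeticFunction.vonMangoldt) (S_subset N)
      (fun n _ _ => ArithmeticFunction.vonMangoldt_nonneg)
    have himg := sum_image_le' (((Finset.Icc 2 (Nat.sqrt N)).filter Nat.Prime) ×ˢ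
        Finset.Icc 2 (Nat.log 2 N)) (fun q => q.1 ^ q.2)
        ArithmeticFunction.vonMangoldt (fun _ => ArithmeticFunction.vonMangoldt_nonneg)
    have hcard : ∑ q ∈ (((Finset.Icc 2 (Nat.sqrt N)).filter Nat.Prime) ×ˢ
        Finset.Icc 2 (Nat.log 2 N)), ArithmeticFunction.vonMangoldt (q.1 ^ q.2)
        ≤ ((Nat.sqrt N : ℝ)) * (Nat.log 2 N) * Real.log N := by
      have hterm : ∀ q ∈ (((Finset.Icc 2 (Nat.sqrt N)).filter Nat.Prime) ×ˢ
          Finset.Icc 2 (Nat.log 2 N)), ArithmeticFunction.vonMangoldt (q.1 ^ q.2) ≤ Real.log N := by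
        rintro ⟨p, k⟩ hq
        simp only [Finset.mem_product, Finset.mem_filter, Finset.mem_Icc] at hq
        rw [ArithmeticFunction.vonMangoldt_apply_pow (by omega)]
        calc ArithmeticFunction.vonMangoldt p ≤ Real.log p :=
              ArithmeticFunction.vonMangoldt_le_log
          _ ≤ Real.log N := by
              apply Real.log_le_log (by exact_mod_cast lt_of_lt_of_le two_pos hq.1.1.1)
              exact_mod_cast le_trans hq.1.1.2 (Nat.sqrt_le_self N)
      calc ∑ q ∈ _, ArithmeticFunction.vonMangoldt (q.1 ^ q.2)
          ≤ ∑ _q ∈ (((Finset.Icc 2 (Nat.sqrt N)).filter Nat.Prime) ×ˢ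
              Finset.Icc 2 (Nat.log 2 N)), Real.log N := Finset.sum_le_sum hterm
        _ ≤ ((Nat.sqrt N : ℝ)) * (Nat.log 2 N) * Real.log N := by
            rw [Finset.sum_const, nsmul_eq_mul]
            have hlogN : (0:ℝ) ≤ Real.log N := Real.log_natCast_nonneg N
            have hc : ((((Finset.Icc 2 (Nat.sqrt N)).filter Nat.Prime) ×ˢ
                Finset.Icc 2 (Nat.log 2 N)).card : ℝ) ≤ (Nat.sqrt N : ℝ) * (Nat.log 2 N) := by
              rw [Finset.card_product]
              push_cast
              have h1 : ((Finset.Icc 2 (Nat.sqrt N)).filter Nat.Prime).card ≤ Nat.sqrt N :=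
                le_trans (Finset.card_filter_le _ _) (by rw [Nat.card_Icc]; omega)
              have h2 : (Finset.Icc 2 (Nat.log 2 N)).card ≤ Nat.log 2 N := by
                rw [Nat.card_Icc]; omega
              exact_mod_cast Nat.mul_le_mul h1 h2
            exact mul_le_mul_of_nonneg_right hc hlogN
    have hfinal : ((Nat.sqrt N : ℝ)) * (Nat.log 2 N) * Real.log N ≤ 32 * N := by
      obtain ⟨hlog4, hy⟩ := log_le_four hN
      have hnl := natlog_le hN
      have hs : (Nat.sqrt N : ℝ) ≤ Real.sqrt N := Real.nat_sqrt_le_real_sqrt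
      set y := Real.sqrt (Real.sqrt N) with hydef
      have hy0 : (0:ℝ) ≤ y := Real.sqrt_nonneg _
      have hN0 : (0:ℝ) ≤ Real.log N := Real.log_natCast_nonneg N
      have hlog2N : (0:ℝ) ≤ (Nat.log 2 N : ℝ) := by positivity
      have hsq : Real.sqrt N * Real.sqrt N ≤ (N:ℝ) := by
        rw [Real.mul_self_sqrt (by positivity)]
      calc (Nat.sqrt N : ℝ) * (Nat.log 2 N) * Real.log N
          ≤ Real.sqrt N * (2 * Real.log N) * Real.log N := by
            apply mul_le_mul _ le_rfl hN0 (by positivity)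
            exact mul_le_mul hs hnl hlog2N (Real.sqrt_nonneg _)
        _ ≤ Real.sqrt N * (2 * (4 * y)) * (4 * y) := by
            apply mul_le_mul _ hlog4 hN0 (by positivity)
            apply mul_le_mul_of_nonneg_left _ (Real.sqrt_nonneg _)
            linarith
        _ = 32 * (Real.sqrt N * (y * y)) := by ring
        _ = 32 * (Real.sqrt N * Real.sqrt N) := by rw [hy]
        _ ≤ 32 * N := by linarith [hsq]
    exact le_trans hle (le_trans himg (le_trans hcard hfinal))
  have hlog4 : Real.log 4 ≤ 2 := by
    have : (4:ℝ) ≤ Real.exp 2 := by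
      have h1 := Real.exp_one_gt_d9
      have h2 : Real.exp 2 = Real.exp 1 * Real.exp 1 := by
        rw [← Real.exp_add]; norm_num
      nlinarith [h1, h2]
    calc Real.log 4 ≤ Real.log (Real.exp 2) := Real.log_le_log (by norm_num) this
      _ = 2 := Real.log_exp 2
  have hN0 : (0:ℝ) ≤ N := by positivity
  nlinarith [hth, hnp, hlog4, hN0, Real.log_natCast_nonneg N]

lemma lambda_sum_est (N : ℕ) (hN : 1 ≤ N) :
    |(∑ d ∈ Finset.Icc 1 N, ArithmeticFunction.vonMangoldt d / d) - Real.log N| ≤ 34 := by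
  set L := ∑ d ∈ Finset.Icc 1 N, ArithmeticFunction.vonMangoldt d / d with hL
  set A := ∑ d ∈ Finset.Icc 1 N, ArithmeticFunction.vonMangoldt d * ((N / d : ℕ) : ℝ) with hA
  have hNR : (0:ℝ) < N := by exact_mod_cast hN
  have hBA_lo : A ≤ (N:ℝ) * L := by
    rw [hA, hL, Finset.mul_sum]
    refine Finset.sum_le_sum fun d hd => ?_
    simp only [Finset.mem_Icc] at hd
    have hd0 : (0:ℝ) < d := by exact_mod_cast hd.1
    have h1 : ((N / d : ℕ) : ℝ) ≤ (N:ℝ) / d := Nat.cast_div_le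
    calc ArithmeticFunction.vonMangoldt d * ((N / d : ℕ) : ℝ)
        ≤ ArithmeticFunction.vonMangoldt d * ((N:ℝ)/d) :=
          mul_le_mul_of_nonneg_left h1 ArithmeticFunction.vonMangoldt_nonneg
      _ = (N:ℝ) * (ArithmeticFunction.vonMangoldt d / d) := by field_simp
  have hBA_hi : (N:ℝ) * L ≤ A + ∑ d ∈ Finset.Icc 1 N, ArithmeticFunction.vonMangoldt d := by
    rw [hA, hL, Finset.mul_sum, ← Finset.sum_add_distrib]
    refine Finset.sum_le_sum fun d hd => ?_
    simp only [Finset.mem_Icc] at hd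
    have hd0 : (0:ℝ) < d := by exact_mod_cast hd.1
    have h2 : (N:ℝ)/d - 1 ≤ ((N / d : ℕ) : ℝ) := by
      have : N < (N / d + 1) * d := by
        calc N < N/d * d + d := Nat.lt_div_mul_add (by omega)
          _ = (N / d + 1) * d := by ring
      have hcast : (N:ℝ) < (((N/d : ℕ):ℝ) + 1) * d := by exact_mod_cast this
      rw [sub_le_iff_le_add, div_le_iff₀ hd0]
      linarith [hcast]
    calc (N:ℝ) * (ArithmeticFunction.vonMangoldt d / d)
        = ArithmeticFunction.vonMangoldt d * ((N:ℝ)/d) := by field_simp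
      _ ≤ ArithmeticFunction.vonMangoldt d * (((N / d : ℕ) : ℝ) + 1) := by
          apply mul_le_mul_of_nonneg_left _ ArithmeticFunction.vonMangoldt_nonneg
          linarith [h2]
      _ = ArithmeticFunction.vonMangoldt d * ((N / d : ℕ) : ℝ)
            + ArithmeticFunction.vonMangoldt d := by ring
  have hA_lo : (N:ℝ) * Real.log N - N ≤ A := by
    rw [hA, ← sum_log_eq]; exact sum_log_ge N
  have hA_hi : A ≤ (N:ℝ) * Real.log N := by
    rw [hA, ← sum_log_eq]; exact sum_log_le N
  have hpsi := psi_le N hN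
  rw [abs_le]
  constructor
  · have : (N:ℝ) * Real.log N - N ≤ (N:ℝ) * L := le_trans hA_lo hBA_lo
    have h3 : (N:ℝ) * (Real.log N - 1) ≤ (N:ℝ) * L := by nlinarith [this]
    have := le_of_mul_le_mul_left h3 hNR
    linarith
  · have : (N:ℝ) * L ≤ (N:ℝ) * Real.log N + 34 * N := by linarith [hBA_hi, hA_hi, hpsi]
    have h3 : (N:ℝ) * L ≤ (N:ℝ) * (Real.log N + 34) := by nlinarith [this]
    have := le_of_mul_le_mul_left h3 hNR
    linarith

lemma prime_lambda_diff (N : ℕ) :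
    0 ≤ (∑ d ∈ Finset.Icc 1 N, ArithmeticFunction.vonMangoldt d / d)
        - ∑ p ∈ (Finset.Icc 1 N).filter Nat.Prime, Real.log p / p ∧
    (∑ d ∈ Finset.Icc 1 N, ArithmeticFunction.vonMangoldt d / d)
        - ∑ p ∈ (Finset.Icc 1 N).filter Nat.Prime, Real.log p / p ≤ 8 := by
  have hsplit := Finset.sum_filter_add_sum_filter_not (Finset.Icc 1 N) Nat.Prime
    (fun d => ArithmeticFunction.vonMangoldt d / d)
  have hprime : ∑ p ∈ (Finset.Icc 1 N).filter Nat.Prime,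
      ArithmeticFunction.vonMangoldt p / p
      = ∑ p ∈ (Finset.Icc 1 N).filter Nat.Prime, Real.log p / p := by
    refine Finset.sum_congr rfl fun p hp => ?_
    rw [ArithmeticFunction.vonMangoldt_apply_prime (Finset.mem_filter.1 hp).2]
  have hdiff : (∑ d ∈ Finset.Icc 1 N, ArithmeticFunction.vonMangoldt d / d)
      - ∑ p ∈ (Finset.Icc 1 N).filter Nat.Prime, Real.log p / p
      = ∑ n ∈ (Finset.Icc 1 N).filter (fun n => ¬ n.Prime),
          ArithmeticFunction.vonMangoldt n / n := by
    rw [← hsplit, hprime]; ring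
  have hf0 : ∀ n : ℕ, 0 ≤ ArithmeticFunction.vonMangoldt n / n := fun n =>
    div_nonneg ArithmeticFunction.vonMangoldt_nonneg (Nat.cast_nonneg n)
  rw [hdiff]
  constructor
  · exact Finset.sum_nonneg fun n _ => hf0 n
  -- restrict to prime powers
  have hsub : ∑ n ∈ (Finset.Icc 1 N).filter (fun n => ¬ n.Prime),
        ArithmeticFunction.vonMangoldt n / n
      = ∑ n ∈ (Finset.Icc 1 N).filter (fun n => IsPrimePow n ∧ ¬ n.Prime),
          ArithmeticFunction.vonMangoldt n / n := by
    apply (Finset.sum_subset ?_ ?_).symm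
    · intro n hn
      simp only [Finset.mem_filter] at hn ⊢
      exact ⟨hn.1, hn.2.2⟩
    · intro n hn hn2
      by_contra hne
      have hne' : ArithmeticFunction.vonMangoldt n ≠ 0 := fun h => hne (by simp [h])
      have hpp := ArithmeticFunction.vonMangoldt_ne_zero_iff.1 hne'
      simp only [Finset.mem_filter] at hn hn2
      exact hn2 ⟨hn.1, hpp, hn.2⟩
  rw [hsub]
  have hle := Finset.sum_le_sum_of_subset_of_nonneg
    (f := fun n => ArithmeticFunction.vonMangoldt n / n) (S_subset N)
    (fun n _ _ => hf0 n)
  have himg := sum_image_le' (((Finset.Icc 2 (Nat.sqrt N)).filter Nat.Prime) ×ˢ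
      Finset.Icc 2 (Nat.log 2 N)) (fun q => q.1 ^ q.2)
      (fun n => ArithmeticFunction.vonMangoldt n / n) (hf0)
  set K := Nat.log 2 N with hK
  have hpair : ∑ q ∈ (((Finset.Icc 2 (Nat.sqrt N)).filter Nat.Prime) ×ˢ Finset.Icc 2 K),
      ArithmeticFunction.vonMangoldt (q.1 ^ q.2) / (q.1 ^ q.2 : ℕ)
      ≤ ∑ m ∈ Finset.Icc 2 (Nat.sqrt N), 4 / ((m:ℝ) * Real.sqrt m) := by
    rw [Finset.sum_product]
    have hinner : ∀ p ∈ (Finset.Icc 2 (Nat.sqrt N)).filter Nat.Prime,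
        ∑ k ∈ Finset.Icc 2 K, ArithmeticFunction.vonMangoldt (p ^ k) / (p ^ k : ℕ)
          ≤ 4 / ((p:ℝ) * Real.sqrt p) := by
      intro p hp
      simp only [Finset.mem_filter, Finset.mem_Icc] at hp
      have hp2 : 2 ≤ p := hp.1.1
      have hpR : (2:ℝ) ≤ p := by exact_mod_cast hp2
      have hpPos : (0:ℝ) < p := by linarith
      have hlogp : 0 ≤ Real.log p := Real.log_nonneg (by linarith)
      have hterm : ∀ k ∈ Finset.Icc 2 K,
          ArithmeticFunction.vonMangoldt (p ^ k) / ((p:ℝ) ^ k)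
            ≤ (Real.log p / (p:ℝ)^2) * (1/2:ℝ)^(k-2) := by
        intro k hk
        simp only [Finset.mem_Icc] at hk
        rw [ArithmeticFunction.vonMangoldt_apply_pow (by omega),
          ArithmeticFunction.vonMangoldt_apply_prime hp.2]
        rw [div_mul_eq_mul_div, div_le_div_iff₀ (by positivity) (by positivity)]
        -- log p * p² ≤ log p (1/2)^(k-2) * p^k ⟺ p² ≤ (1/2)^{k-2} p^k i.e. 2^{k-2} p² ≤ p^k
        have hk2 : (2:ℝ)^(k-2) * (p:ℝ)^2 ≤ (p:ℝ)^k := by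
          have : (2:ℝ)^(k-2) ≤ (p:ℝ)^(k-2) := pow_le_pow_left₀ (by norm_num) hpR _
          calc (2:ℝ)^(k-2) * (p:ℝ)^2 ≤ (p:ℝ)^(k-2) * (p:ℝ)^2 :=
                mul_le_mul_of_nonneg_right this (by positivity)
            _ = (p:ℝ)^k := by rw [← pow_add]; congr 1; omega
        have h12 : ((1:ℝ)/2)^(k-2) = ((2:ℝ)^(k-2))⁻¹ := by
          rw [one_div, inv_pow]
        rw [h12]
        have h2k : (0:ℝ) < (2:ℝ)^(k-2) := by positivity
        have h5 : (p:ℝ)^2 ≤ ((2:ℝ)^(k-2))⁻¹ * (p:ℝ)^k := by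
          rw [inv_mul_eq_div, le_div_iff₀ h2k]
          calc (p:ℝ)^2 * (2:ℝ)^(k-2) = (2:ℝ)^(k-2) * (p:ℝ)^2 := by ring
            _ ≤ (p:ℝ)^k := hk2
        calc Real.log p * (p:ℝ)^2 ≤ Real.log p * (((2:ℝ)^(k-2))⁻¹ * (p:ℝ)^k) :=
              mul_le_mul_of_nonneg_left h5 hlogp
          _ = Real.log p * ((2:ℝ)^(k-2))⁻¹ * (p:ℝ)^k := by ring
      -- sum over k
      have hcast : ∀ k, ((p^k : ℕ) : ℝ) = (p:ℝ)^k := fun k => by push_cast; ring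
      have hsum1 : ∑ k ∈ Finset.Icc 2 K, ArithmeticFunction.vonMangoldt (p ^ k) / ((p^k : ℕ) : ℝ)
          ≤ ∑ k ∈ Finset.Icc 2 K, (Real.log p / (p:ℝ)^2) * (1/2:ℝ)^(k-2) := by
        refine Finset.sum_le_sum fun k hk => ?_
        rw [hcast k]
        exact hterm k hk
      have hgeo : ∑ k ∈ Finset.Icc 2 K, ((1:ℝ)/2)^(k-2) ≤ 2 := by
        have : Finset.Icc 2 K = Finset.Ico 2 (K+1) := by
          rw [Finset.Ico_add_one_right_eq_Icc]
        rw [this, Finset.sum_Ico_eq_sum_range]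
        have heq : ∀ i ∈ Finset.range (K + 1 - 2), ((1:ℝ)/2)^(2 + i - 2) = ((1:ℝ)/2)^i := by
          intro i _
          congr 1
          omega
        rw [Finset.sum_congr rfl heq]
        exact sum_geometric_two_le _
      have hsum2 : ∑ k ∈ Finset.Icc 2 K, (Real.log p / (p:ℝ)^2) * (1/2:ℝ)^(k-2)
          ≤ (Real.log p / (p:ℝ)^2) * 2 := by
        rw [← Finset.mul_sum]
        exact mul_le_mul_of_nonneg_left hgeo (by positivity)
      have hlast : (Real.log p / (p:ℝ)^2) * 2 ≤ 4 / ((p:ℝ) * Real.sqrt p) := by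
        have hlp : Real.log p ≤ 2 * Real.sqrt p := log_le_two_sqrt hpPos
        have hsp : (0:ℝ) < Real.sqrt p := Real.sqrt_pos.2 hpPos
        have hps : Real.sqrt p * Real.sqrt p = (p:ℝ) := Real.mul_self_sqrt hpPos.le
        rw [div_mul_eq_mul_div, div_le_div_iff₀ (by positivity) (by positivity)]
        -- log p * 2 * (p * √p) ≤ 4 * p²
        have : 2 * Real.sqrt p * 2 * ((p:ℝ) * Real.sqrt p) = 4 * (p:ℝ)^2 := by
          rw [pow_two]; nlinarith [hps]
        nlinarith [hlp, hsp, hps, mul_pos hpPos hsp]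
      calc ∑ k ∈ Finset.Icc 2 K, ArithmeticFunction.vonMangoldt (p ^ k) / ((p^k : ℕ) : ℝ)
          ≤ ∑ k ∈ Finset.Icc 2 K, (Real.log p / (p:ℝ)^2) * (1/2:ℝ)^(k-2) := hsum1
        _ ≤ (Real.log p / (p:ℝ)^2) * 2 := hsum2
        _ ≤ 4 / ((p:ℝ) * Real.sqrt p) := hlast
    calc ∑ p ∈ (Finset.Icc 2 (Nat.sqrt N)).filter Nat.Prime,
          ∑ k ∈ Finset.Icc 2 K, ArithmeticFunction.vonMangoldt (p ^ k) / ((p^k : ℕ) : ℝ)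
        ≤ ∑ p ∈ (Finset.Icc 2 (Nat.sqrt N)).filter Nat.Prime, 4 / ((p:ℝ) * Real.sqrt p) :=
          Finset.sum_le_sum hinner
      _ ≤ ∑ m ∈ Finset.Icc 2 (Nat.sqrt N), 4 / ((m:ℝ) * Real.sqrt m) :=
          Finset.sum_le_sum_of_subset_of_nonneg (Finset.filter_subset _ _)
            (fun m _ _ => by positivity)
  have htail : ∑ m ∈ Finset.Icc 2 (Nat.sqrt N), 4 / ((m:ℝ) * Real.sqrt m) ≤ 8 := by
    rcases Nat.lt_or_ge (Nat.sqrt N) 1 with h | h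
    · have : Nat.sqrt N < 2 := by omega
      rw [Finset.Icc_eq_empty (by omega)]
      norm_num
    · have htel := telescope_sum (Nat.sqrt N) h
      have h2 : 0 ≤ 2 / Real.sqrt (Nat.sqrt N) := by positivity
      have heq : ∑ m ∈ Finset.Icc 2 (Nat.sqrt N), 4 / ((m:ℝ) * Real.sqrt m)
          = 4 * ∑ m ∈ Finset.Icc 2 (Nat.sqrt N), 1 / ((m:ℝ) * Real.sqrt m) := by
        rw [Finset.mul_sum]
        refine Finset.sum_congr rfl fun m _ => ?_
        ring
      rw [heq]
      linarith [htel, h2]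
  exact le_trans hle (le_trans himg (le_trans hpair htail))

theorem stmt_8 :
    ∃ C : ℝ, ∀ x : ℝ, 2 ≤ x →
      |(∑ p ∈ primesUpTo x, Real.log p / p) - Real.log x| ≤ C := by
  refine ⟨43, fun x hx => ?_⟩
  set N := ⌊x⌋₊ with hNdef
  have hxpos : (0:ℝ) < x := by linarith
  have hN2 : 2 ≤ N := Nat.le_floor (by exact_mod_cast hx)
  have hN1 : 1 ≤ N := by omega
  have hNx : (N:ℝ) ≤ x := Nat.floor_le hxpos.le
  have hNpos : (0:ℝ) < N := by exact_mod_cast hN1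
  have hxN : x < (N:ℝ) + 1 := Nat.lt_floor_add_one x
  have hlog1 : Real.log N ≤ Real.log x := Real.log_le_log hNpos hNx
  have hlog2 : Real.log x ≤ Real.log N + 1 := by
    have h2N : x ≤ 2 * N := by
      have : (N:ℝ) + 1 ≤ 2 * N := by
        have : (1:ℝ) ≤ N := by exact_mod_cast hN1
        linarith
      linarith
    calc Real.log x ≤ Real.log (2 * N) := Real.log_le_log hxpos h2N
      _ = Real.log 2 + Real.log N := Real.log_mul (by norm_num) (ne_of_gt hNpos)
      _ ≤ Real.log N + 1 := by
          have := Real.log_two_lt_d9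
          linarith
  have hld := lambda_sum_est N hN1
  obtain ⟨hd0, hd8⟩ := prime_lambda_diff N
  have hps : primesUpTo x = (Finset.Icc 1 N).filter Nat.Prime := rfl
  rw [hps]
  rw [abs_le] at hld ⊢
  constructor
  · linarith [hld.1, hd8, hlog2]
  · linarith [hld.2, hd0, hlog1]
end

section
/- (Chebyshev bound) ψ(x) = O(x) as x → ∞, i.e., there exists a constant C such that ψ(x) ≤ C·x for all x ≥ 1. -/
open Finset Filter Real Asymptotics

lemma theta_bound (N : ℕ) :
    ∑ p ∈ (Finset.Icc 1 N).filter Nat.Prime, Real.log p ≤ N * Real.log 4 := by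
  have hfl : (Finset.Icc 1 N).filter Nat.Prime = (Finset.range (N + 1)).filter Nat.Prime := by
    ext p
    simp only [mem_filter, mem_Icc, mem_range, Nat.lt_succ_iff]
    exact ⟨fun h => ⟨h.1.2, h.2⟩, fun h => ⟨⟨h.2.one_lt.le, h.1⟩, h.2⟩⟩
  rw [hfl]
  have h1 : ∑ p ∈ (Finset.range (N + 1)).filter Nat.Prime, Real.log p
      = Real.log ((primorial N : ℕ) : ℝ) := by
    rw [primorial]
    push_cast
    rw [Real.log_prod]
    intro p hp
    exact_mod_cast (Finset.mem_filter.mp hp).2.pos.ne'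
  rw [h1]
  calc Real.log ((primorial N : ℕ) : ℝ) ≤ Real.log ((4 : ℝ) ^ N) := by
        apply Real.log_le_log (by exact_mod_cast primorial_pos N)
        exact_mod_cast primorial_le_4_pow N
    _ = N * Real.log 4 := by rw [Real.log_pow]

theorem stmt_9 : ∃ C : ℝ, ∀ x : ℝ, 1 ≤ x → chePsi x ≤ C * x := by
  refine ⟨Real.log 4 + 2, fun x hx => ?_⟩
  set N := ⌊x⌋₊ with hNdef
  have hx0 : (0:ℝ) ≤ x := by linarith
  have hNx : (N : ℝ) ≤ x := Nat.floor_le hx0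
  have hN1 : 1 ≤ N := Nat.le_floor (by exact_mod_cast hx)
  have hN0 : (1:ℝ) ≤ (N:ℝ) := by exact_mod_cast hN1
  -- rewrite chePsi as a sum over prime powers
  have h1 : chePsi x = ∑ n ∈ (Finset.Icc 1 N).filter IsPrimePow, Real.log n.minFac := by
    rw [chePsi, ← hNdef]
    rw [Finset.sum_filter]
    exact Finset.sum_congr rfl fun n _ => ArithmeticFunction.vonMangoldt_apply
  set S := (Finset.Icc 1 N).filter IsPrimePow with hS
  have hsplit : ∑ n ∈ S, Real.log n.minFac
      = (∑ n ∈ S.filter Nat.Prime, Real.log n.minFac)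
        + ∑ n ∈ S.filter (fun n => ¬ n.Prime), Real.log n.minFac :=
    (Finset.sum_filter_add_sum_filter_not S Nat.Prime _).symm
  -- part 1 : primes
  have hpart1 : ∑ n ∈ S.filter Nat.Prime, Real.log n.minFac ≤ (N:ℝ) * Real.log 4 := by
    have hSP : S.filter Nat.Prime = (Finset.Icc 1 N).filter Nat.Prime := by
      rw [hS, Finset.filter_filter]
      apply Finset.filter_congr
      intro n _
      simp only [and_iff_right_iff_imp]
      exact fun h => h.prime.isPrimePow
    rw [hSP]
    calc ∑ n ∈ (Finset.Icc 1 N).filter Nat.Prime, Real.log n.minFac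
        = ∑ n ∈ (Finset.Icc 1 N).filter Nat.Prime, Real.log n := by
          apply Finset.sum_congr rfl
          intro n hn
          rw [(Finset.mem_filter.mp hn).2.minFac_eq]
      _ ≤ (N:ℝ) * Real.log 4 := theta_bound N
  -- part 2 : proper prime powers
  set S2 := S.filter (fun n => ¬ n.Prime) with hS2
  have hmem2 : ∀ n ∈ S2, IsPrimePow n ∧ ¬ n.Prime ∧ n ≤ N := by
    intro n hn
    rw [hS2, hS] at hn
    simp only [Finset.mem_filter, Finset.mem_Icc] at hn
    exact ⟨hn.1.2, hn.2, hn.1.1.2⟩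
  have hpart2 : ∑ n ∈ S2, Real.log n.minFac ≤ 2 * (N:ℝ) := by
    classical
    have hlogN : (0:ℝ) ≤ Real.log N := Real.log_nonneg hN0
    set g : ℕ → ℕ × ℕ := fun n => (n.minFac, n.factorization n.minFac) with hg
    set T := ((Finset.Icc 2 N) ×ˢ (Finset.Icc 2 N)).filter
      (fun pk : ℕ × ℕ => pk.1.Prime ∧ pk.1 ^ pk.2 ≤ N) with hT
    have hfacts : ∀ n ∈ S2, n.minFac.Prime ∧ 2 ≤ n.factorization n.minFac ∧
        n.minFac ^ n.factorization n.minFac = n := by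
      intro n hn
      obtain ⟨hpp, hnp, hnN⟩ := hmem2 n hn
      have hne1 : n ≠ 1 := hpp.ne_one
      have hp : n.minFac.Prime := Nat.minFac_prime hne1
      have hrec := hpp.minFac_pow_factorization_eq
      refine ⟨hp, ?_, hrec⟩
      by_contra hk
      push_neg at hk
      interval_cases h : n.factorization n.minFac
      · rw [pow_zero] at hrec; exact hne1 hrec.symm
      · rw [pow_one] at hrec; rw [← hrec] at hnp; exact hnp hp
    have hinj : ∀ a ∈ S2, ∀ b ∈ S2, g a = g b → a = b := by
      intro a ha b hb hab
      obtain ⟨_, _, hra⟩ := hfacts a ha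
      obtain ⟨_, _, hrb⟩ := hfacts b hb
      rw [hg, Prod.mk.injEq] at hab
      rw [← hra, ← hrb, hab.2, hab.1]
    have himg : ∑ n ∈ S2, Real.log n.minFac = ∑ pk ∈ S2.image g, Real.log pk.1 := by
      rw [Finset.sum_image hinj]
    have hsub : S2.image g ⊆ T := by
      intro pk hpk
      rw [Finset.mem_image] at hpk
      obtain ⟨n, hn, rfl⟩ := hpk
      obtain ⟨hpp, hnp, hnN⟩ := hmem2 n hn
      obtain ⟨hp, hk2, hrec⟩ := hfacts n hn
      have hn0 : 0 < n := hpp.pos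
      have hpn : n.minFac ≤ n := Nat.minFac_le hn0
      have h2k : 2 ^ (n.factorization n.minFac) ≤ n := by
        calc 2 ^ (n.factorization n.minFac) ≤ n.minFac ^ (n.factorization n.minFac) :=
              Nat.pow_le_pow_left hp.two_le _
          _ = n := hrec
      have hklt : n.factorization n.minFac < 2 ^ (n.factorization n.minFac) :=
        Nat.lt_two_pow_self
      rw [hT, Finset.mem_filter, Finset.mem_product, Finset.mem_Icc, Finset.mem_Icc]
      simp only [hg]
      exact ⟨⟨⟨hp.two_le, le_trans hpn hnN⟩, ⟨hk2, by omega⟩⟩, hp, by rw [hrec]; exact hnN⟩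
    have hmono : ∑ pk ∈ S2.image g, Real.log pk.1 ≤ ∑ pk ∈ T, Real.log pk.1 := by
      apply Finset.sum_le_sum_of_subset_of_nonneg hsub
      intro pk hpk _
      apply Real.log_nonneg
      have := (Finset.mem_filter.mp hpk).2.1.one_lt
      exact_mod_cast this.le
    have hTbound : ∑ pk ∈ T, Real.log pk.1 ≤ (Nat.sqrt N : ℝ) * Real.log N := by
      rw [hT, Finset.sum_filter, Finset.sum_product]
      have hinner : ∀ p ∈ Finset.Icc 2 N,
          (∑ k ∈ Finset.Icc 2 N, if p.Prime ∧ p ^ k ≤ N then Real.log p else 0)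
          ≤ if p.Prime ∧ p ^ 2 ≤ N then Real.log N else 0 := by
        intro p hpmem
        by_cases hcond : p.Prime ∧ p ^ 2 ≤ N
        · rw [if_pos hcond]
          have hplog : 0 < Real.log p := Real.log_pos (by exact_mod_cast hcond.1.one_lt)
          calc (∑ k ∈ Finset.Icc 2 N, if p.Prime ∧ p ^ k ≤ N then Real.log p else 0)
              = ∑ k ∈ Finset.Icc 2 N, if p ^ k ≤ N then Real.log p else 0 :=
                Finset.sum_congr rfl fun k _ => by simp [hcond.1]
            _ = ∑ k ∈ (Finset.Icc 2 N).filter (fun k => p ^ k ≤ N), Real.log p :=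
                (Finset.sum_filter _ _).symm
            _ = ((Finset.Icc 2 N).filter (fun k => p ^ k ≤ N)).card * Real.log p := by
                rw [Finset.sum_const, nsmul_eq_mul]
            _ ≤ (Real.log N / Real.log p) * Real.log p := by
                apply mul_le_mul_of_nonneg_right _ hplog.le
                set B := Real.log N / Real.log p with hB
                have hB0 : 0 ≤ B := div_nonneg hlogN hplog.le
                have hsubA : (Finset.Icc 2 N).filter (fun k => p ^ k ≤ N)
                    ⊆ Finset.Icc 2 ⌊B⌋₊ := by
                  intro k hk
                  rw [Finset.mem_filter, Finset.mem_Icc] at hk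
                  rw [Finset.mem_Icc]
                  refine ⟨hk.1.1, Nat.le_floor ?_⟩
                  rw [hB, le_div_iff₀ hplog]
                  calc (k:ℝ) * Real.log p = Real.log ((p:ℝ) ^ k) := by rw [Real.log_pow]
                    _ ≤ Real.log N := Real.log_le_log (pow_pos (by exact_mod_cast hcond.1.pos) k) (by exact_mod_cast hk.2)
                calc (((Finset.Icc 2 N).filter (fun k => p ^ k ≤ N)).card : ℝ)
                    ≤ ((Finset.Icc 2 ⌊B⌋₊).card : ℝ) := by
                      exact_mod_cast Finset.card_le_card hsubA
                  _ ≤ (⌊B⌋₊ : ℝ) := by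
                      rw [Nat.card_Icc]
                      have : ⌊B⌋₊ + 1 - 2 ≤ ⌊B⌋₊ := by omega
                      exact_mod_cast this
                  _ ≤ B := Nat.floor_le hB0
            _ = Real.log N := div_mul_cancel₀ _ hplog.ne'
        · rw [if_neg hcond]
          apply le_of_eq
          apply Finset.sum_eq_zero
          intro k hk
          rw [Finset.mem_Icc] at hk
          rw [if_neg]
          rintro ⟨hpp2, hpkN⟩
          exact hcond ⟨hpp2, le_trans (Nat.pow_le_pow_right hpp2.pos hk.1) hpkN⟩
      calc ∑ p ∈ Finset.Icc 2 N,
            (∑ k ∈ Finset.Icc 2 N, if p.Prime ∧ p ^ k ≤ N then Real.log p else 0)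
          ≤ ∑ p ∈ Finset.Icc 2 N, if p.Prime ∧ p ^ 2 ≤ N then Real.log N else 0 :=
            Finset.sum_le_sum hinner
        _ = (((Finset.Icc 2 N).filter (fun p => p.Prime ∧ p ^ 2 ≤ N)).card : ℝ) * Real.log N := by
            rw [← Finset.sum_filter, Finset.sum_const, nsmul_eq_mul]
        _ ≤ (Nat.sqrt N : ℝ) * Real.log N := by
            apply mul_le_mul_of_nonneg_right _ hlogN
            have hsubQ : (Finset.Icc 2 N).filter (fun p => p.Prime ∧ p ^ 2 ≤ N)
                ⊆ Finset.Icc 1 (Nat.sqrt N) := by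
              intro p hp2
              rw [Finset.mem_filter, Finset.mem_Icc] at hp2
              rw [Finset.mem_Icc]
              refine ⟨by omega, ?_⟩
              rw [Nat.le_sqrt']
              exact hp2.2.2

            calc ((((Finset.Icc 2 N).filter (fun p => p.Prime ∧ p ^ 2 ≤ N)).card : ℕ) : ℝ)
                ≤ ((Finset.Icc 1 (Nat.sqrt N)).card : ℝ) := by
                  exact_mod_cast Finset.card_le_card hsubQ
              _ = (Nat.sqrt N : ℝ) := by rw [Nat.card_Icc]; simp
    have hfinal : (Nat.sqrt N : ℝ) * Real.log N ≤ 2 * (N:ℝ) := by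
      have hs0 : 0 < Real.sqrt N := Real.sqrt_pos.mpr (by linarith)
      have h1 : (Nat.sqrt N : ℝ) ≤ Real.sqrt N := Real.nat_sqrt_le_real_sqrt
      have h2 : Real.log N ≤ 2 * Real.sqrt N := by
        have hls : Real.log (Real.sqrt N) = Real.log N / 2 := Real.log_sqrt (by linarith)
        have := Real.log_le_sub_one_of_pos hs0
        nlinarith [hs0]
      calc (Nat.sqrt N : ℝ) * Real.log N ≤ Real.sqrt N * (2 * Real.sqrt N) :=
            mul_le_mul h1 h2 hlogN hs0.le
        _ = 2 * (Real.sqrt N * Real.sqrt N) := by ring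
        _ = 2 * (N:ℝ) := by rw [Real.mul_self_sqrt (by linarith)]
    calc ∑ n ∈ S2, Real.log n.minFac = ∑ pk ∈ S2.image g, Real.log pk.1 := himg
      _ ≤ ∑ pk ∈ T, Real.log pk.1 := hmono
      _ ≤ (Nat.sqrt N : ℝ) * Real.log N := hTbound
      _ ≤ 2 * (N:ℝ) := hfinal
  rw [h1, hsplit]
  calc (∑ n ∈ S.filter Nat.Prime, Real.log n.minFac) + ∑ n ∈ S2, Real.log n.minFac
      ≤ (N:ℝ) * Real.log 4 + 2 * (N:ℝ) := add_le_add hpart1 hpart2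
    _ = (Real.log 4 + 2) * (N:ℝ) := by ring
    _ ≤ (Real.log 4 + 2) * x := by
        apply mul_le_mul_of_nonneg_left hNx
        have : (0:ℝ) ≤ Real.log 4 := Real.log_nonneg (by norm_num)
        linarith
end

section
/- ∑_{n ≤ z} τ(n) = z·log(z) + C·z + O(√z) for z ≥ 1, for some absolute constant C, where τ(n) is the number of positive divisors of n. -/
open Finset Filter Real Asymptotics

lemma tail_sum (N : ℕ) :
    ∑ d ∈ Ioc (Nat.sqrt N) N, N / d
      = ∑ a ∈ Icc 1 (Nat.sqrt N), (N / a - Nat.sqrt N) := by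
  set K := Nat.sqrt N with hK
  have step1 : ∀ d ∈ Ioc K N, N / d = ∑ a ∈ Icc 1 K, (if a * d ≤ N then 1 else 0) := by
    intro d hd
    simp only [mem_Ioc] at hd
    have hd0 : 0 < d := lt_of_le_of_lt (Nat.zero_le _) hd.1
    have hNd : N / d ≤ K := by
      have h2 : N / d < K + 1 := by
        rw [Nat.div_lt_iff_lt_mul hd0]
        calc N < (K + 1) * (K + 1) := Nat.lt_succ_sqrt N
          _ ≤ (K + 1) * d := Nat.mul_le_mul_left _ hd.1
      omega
    rw [← card_filter]
    have hfe : (Icc 1 K).filter (fun a => a * d ≤ N) = Icc 1 (N / d) := by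
      ext a
      simp only [mem_filter, mem_Icc]
      constructor
      · rintro ⟨⟨h1, _⟩, h2⟩
        exact ⟨h1, (Nat.le_div_iff_mul_le hd0).2 h2⟩
      · rintro ⟨h1, h2⟩
        exact ⟨⟨h1, h2.trans hNd⟩, (Nat.le_div_iff_mul_le hd0).1 h2⟩
    rw [hfe]
    simp [Nat.card_Icc]
  rw [Finset.sum_congr rfl step1, Finset.sum_comm]
  refine Finset.sum_congr rfl fun a ha => ?_
  simp only [mem_Icc] at ha
  have ha0 : 0 < a := ha.1
  have hfe : (Ioc K N).filter (fun d => a * d ≤ N) = Ioc K (N / a) := by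
    ext d
    simp only [mem_filter, mem_Ioc]
    constructor
    · rintro ⟨⟨h1, _⟩, h2⟩
      refine ⟨h1, (Nat.le_div_iff_mul_le ha0).2 (by rwa [Nat.mul_comm] at h2)⟩
    · rintro ⟨h1, h2⟩
      have h3 : d * a ≤ N := (Nat.le_div_iff_mul_le ha0).1 h2
      exact ⟨⟨h1, h2.trans (Nat.div_le_self _ _)⟩, by rwa [Nat.mul_comm] at h3⟩
  rw [← card_filter, hfe, Nat.card_Ioc]


lemma sum_tau_eq (N : ℕ) :
    ∑ n ∈ Icc 1 N, (n.divisors.card) = ∑ d ∈ Icc 1 N, N / d := by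
  have h1 : ∀ n ∈ Icc 1 N, n.divisors.card = ((Icc 1 N).filter (· ∣ n)).card := by
    intro n hn
    simp only [mem_Icc] at hn
    congr 1
    ext d
    simp only [Nat.mem_divisors, mem_filter, mem_Icc]
    constructor
    · rintro ⟨hd, hn0⟩
      exact ⟨⟨Nat.one_le_iff_ne_zero.2 (fun h => by simp [h] at hd; omega),
        (Nat.le_of_dvd (by omega) hd).trans hn.2⟩, hd⟩
    · rintro ⟨_, hd⟩; exact ⟨hd, by omega⟩
  rw [Finset.sum_congr rfl h1]
  simp only [card_filter]
  rw [Finset.sum_comm]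
  refine Finset.sum_congr rfl fun d hd => ?_
  have h2 : ∑ n ∈ Icc 1 N, (if d ∣ n then 1 else 0) = ((Icc 1 N).filter (d ∣ ·)).card := by
    rw [card_filter]
  rw [h2]
  have h3 : Icc 1 N = Ioc 0 N := rfl
  rw [h3]
  exact Nat.Ioc_filter_dvd_card_eq_div N d

lemma hyperbola (N : ℕ) :
    (∑ n ∈ Icc 1 N, (n.divisors.card)) + Nat.sqrt N * Nat.sqrt N
      = 2 * ∑ d ∈ Icc 1 (Nat.sqrt N), N / d := by
  set K := Nat.sqrt N with hK
  have hKN : K ≤ N := Nat.sqrt_le_self N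
  have hsplit : ∑ d ∈ Icc 1 N, N / d
      = (∑ d ∈ Icc 1 K, N / d) + ∑ d ∈ Ioc K N, N / d := by
    have h3 : Icc 1 N = Ioc 0 N := rfl
    have h4 : Icc 1 K = Ioc 0 K := rfl
    rw [h3, h4, Finset.sum_Ioc_consecutive _ (Nat.zero_le K) hKN]
  have hlast : (∑ a ∈ Icc 1 K, (N / a - K)) + K * K = ∑ a ∈ Icc 1 K, N / a := by
    have hterm : ∀ a ∈ Icc 1 K, N / a - K + K = N / a := by
      intro a ha
      simp only [mem_Icc] at ha
      have hKa : K ≤ N / a := by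
        rw [Nat.le_div_iff_mul_le ha.1]
        calc K * a ≤ K * K := Nat.mul_le_mul_left _ ha.2
          _ ≤ N := by have h := Nat.sqrt_le' N; rwa [pow_two] at h
      omega
    calc (∑ a ∈ Icc 1 K, (N / a - K)) + K * K
        = ∑ a ∈ Icc 1 K, (N / a - K + K) := by
          rw [Finset.sum_add_distrib, Finset.sum_const, Nat.card_Icc]
          simp [Nat.mul_comm]
      _ = ∑ a ∈ Icc 1 K, N / a := Finset.sum_congr rfl hterm
  rw [sum_tau_eq, hsplit, tail_sum, ← hK]
  omega


lemma harm_cast (n : ℕ) : ((harmonic n : ℝ)) = ∑ d ∈ Icc 1 n, ((d : ℝ))⁻¹ := by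
  rw [harmonic_eq_sum_Icc]
  push_cast
  rfl

lemma harm_bound (n : ℕ) (hn : 1 ≤ n) :
    |(∑ d ∈ Icc 1 n, ((d : ℝ))⁻¹) - (Real.log n + Real.eulerMascheroniConstant)| ≤ 1 / n := by
  rw [← harm_cast]
  set H := ((harmonic n : ℝ)) with hH
  have hn0 : (0 : ℝ) < n := by positivity
  have h1 := Real.eulerMascheroniConstant_lt_eulerMascheroniSeq' n
  have h2 := Real.eulerMascheroniSeq_lt_eulerMascheroniConstant n
  rw [Real.eulerMascheroniSeq', if_neg (by omega)] at h1
  rw [Real.eulerMascheroniSeq] at h2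
  have hlog : Real.log (n + 1) - Real.log n ≤ 1 / n := by
    rw [← Real.log_div (by positivity) (by positivity)]
    have := Real.log_le_sub_one_of_pos (show (0:ℝ) < (n + 1) / n by positivity)
    calc Real.log ((n + 1) / n) ≤ (n + 1) / n - 1 := this
      _ = 1 / n := by field_simp; ring
  rw [abs_le]
  constructor
  · nlinarith [h1]
  · nlinarith [h2, hlog]

lemma sum_div_bound (N K : ℕ) (hK : 1 ≤ K) :
    |(∑ d ∈ Icc 1 K, ((N / d : ℕ) : ℝ))
        - (N : ℝ) * (Real.log K + Real.eulerMascheroniConstant)|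
      ≤ (K : ℝ) + (N : ℝ) / K := by
  have hKr : (0 : ℝ) < K := by positivity
  have hA : |(∑ d ∈ Icc 1 K, ((N / d : ℕ) : ℝ)) - ∑ d ∈ Icc 1 K, (N : ℝ) / d| ≤ K := by
    rw [← Finset.sum_sub_distrib]
    calc |∑ d ∈ Icc 1 K, (((N / d : ℕ) : ℝ) - (N : ℝ) / d)|
        ≤ ∑ d ∈ Icc 1 K, |((N / d : ℕ) : ℝ) - (N : ℝ) / d| := Finset.abs_sum_le_sum_abs _ _
      _ ≤ ∑ _d ∈ Icc 1 K, (1 : ℝ) := by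
          refine Finset.sum_le_sum fun d hd => ?_
          simp only [Finset.mem_Icc] at hd
          have hd0 : (0 : ℝ) < d := by exact_mod_cast hd.1
          have hle : ((N / d : ℕ) : ℝ) ≤ (N : ℝ) / d := Nat.cast_div_le
          have hge : (N : ℝ) / d ≤ ((N / d : ℕ) : ℝ) + 1 := by
            rw [div_le_iff₀ hd0]
            have h1 := Nat.div_add_mod N d
            have h2 : N % d < d := Nat.mod_lt _ hd.1
            have h3n : N ≤ N / d * d + d := by
              calc N = d * (N / d) + N % d := h1.symm
                _ ≤ d * (N / d) + d := Nat.add_le_add_left h2.le _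
                _ = N / d * d + d := by rw [Nat.mul_comm]
            have h3 : (N : ℝ) ≤ ((N / d : ℕ) : ℝ) * d + d := by exact_mod_cast h3n
            linarith [h3]
          rw [abs_le]
          constructor <;> linarith
      _ = K := by simp
  have hB : |(∑ d ∈ Icc 1 K, (N : ℝ) / d)
      - (N : ℝ) * (Real.log K + Real.eulerMascheroniConstant)| ≤ (N : ℝ) / K := by
    have hsum : ∑ d ∈ Icc 1 K, (N : ℝ) / d = (N : ℝ) * ∑ d ∈ Icc 1 K, ((d : ℝ))⁻¹ := by
      rw [Finset.mul_sum]
      exact Finset.sum_congr rfl fun d _ => by rw [div_eq_mul_inv]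
    rw [hsum, ← mul_sub, abs_mul, abs_of_nonneg (by positivity : (0:ℝ) ≤ (N:ℝ))]
    have := harm_bound K hK
    calc (N : ℝ) * |(∑ d ∈ Icc 1 K, ((d : ℝ))⁻¹)
          - (Real.log K + Real.eulerMascheroniConstant)|
        ≤ (N : ℝ) * (1 / K) := by
          exact mul_le_mul_of_nonneg_left this (by positivity)
      _ = (N : ℝ) / K := by ring
  calc |(∑ d ∈ Icc 1 K, ((N / d : ℕ) : ℝ))
        - (N : ℝ) * (Real.log K + Real.eulerMascheroniConstant)|
      ≤ |(∑ d ∈ Icc 1 K, ((N / d : ℕ) : ℝ)) - ∑ d ∈ Icc 1 K, (N : ℝ) / d|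
        + |(∑ d ∈ Icc 1 K, (N : ℝ) / d)
          - (N : ℝ) * (Real.log K + Real.eulerMascheroniConstant)| := abs_sub_le _ _ _
    _ ≤ (K : ℝ) + (N : ℝ) / K := add_le_add hA hB

open Real

lemma main_nat (N : ℕ) (hN : 1 ≤ N) :
    |(∑ n ∈ Icc 1 N, (n.divisors.card : ℝ))
        - ((N : ℝ) * Real.log N + (2 * Real.eulerMascheroniConstant - 1) * N)|
      ≤ 20 * Real.sqrt N := by
  set K := Nat.sqrt N with hKdef
  have hK1 : 1 ≤ K := Nat.one_le_iff_ne_zero.2 (by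
    simp [hKdef, Nat.sqrt_eq_zero]; omega)
  have hKr : (0 : ℝ) < K := by positivity
  have hK1r : (1 : ℝ) ≤ K := by exact_mod_cast hK1
  have hNr : (0 : ℝ) < N := by positivity
  have hKK : (K : ℝ) * K ≤ N := by
    have h := Nat.sqrt_le' N
    rw [pow_two] at h
    exact_mod_cast h
  have hNle : (N : ℝ) ≤ (K : ℝ) * K + 2 * K := by
    have h := Nat.lt_succ_sqrt N
    have h2 : N ≤ K * K + 2 * K := by
      rw [hKdef]; nlinarith [h]
    exact_mod_cast h2
  have hsqrt : (K : ℝ) ≤ Real.sqrt N := by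
    have h1 : Real.sqrt ((K:ℝ)*K) ≤ Real.sqrt N := Real.sqrt_le_sqrt hKK
    rwa [Real.sqrt_mul_self (le_of_lt hKr)] at h1
  -- hyperbola identity, cast to ℝ
  set T : ℝ := ∑ n ∈ Icc 1 N, (n.divisors.card : ℝ) with hT
  set S : ℝ := ∑ d ∈ Icc 1 K, ((N / d : ℕ) : ℝ) with hS
  have hhyp : T + (K : ℝ) * K = 2 * S := by
    have h := hyperbola N
    rw [← hKdef] at h
    have hc : ((∑ n ∈ Icc 1 N, (n.divisors.card)) + K * K : ℕ) = ((2 * ∑ d ∈ Icc 1 K, N / d : ℕ)) := h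
    have := congrArg (fun x : ℕ => (x : ℝ)) hc
    push_cast at this
    simpa [hT, hS] using this
  -- bound on S
  have hSb := sum_div_bound N K hK1
  rw [← hS] at hSb
  have hNK : (N : ℝ) / K ≤ 3 * K := by
    rw [div_le_iff₀ hKr]
    nlinarith
  have ha1 : S - (N : ℝ) * (Real.log K + eulerMascheroniConstant) ≤ 4 * K := by
    have := (abs_le.1 hSb).2; linarith
  have ha2 : -(4 * (K : ℝ)) ≤ S - (N : ℝ) * (Real.log K + eulerMascheroniConstant) := by
    have := (abs_le.1 hSb).1; linarith
  -- log bound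
  have hKKr : (0 : ℝ) < (K : ℝ) * K := by positivity
  have hlogKK : Real.log ((K : ℝ) * K) = Real.log K + Real.log K :=
    Real.log_mul (ne_of_gt hKr) (ne_of_gt hKr)
  have hD0 : 0 ≤ Real.log N - Real.log ((K : ℝ) * K) :=
    sub_nonneg.2 (Real.log_le_log hKKr hKK)
  have hDle : Real.log N - Real.log ((K : ℝ) * K) ≤ 2 / K := by
    rw [← Real.log_div (ne_of_gt hNr) (ne_of_gt hKKr)]
    have h1 := Real.log_le_sub_one_of_pos (show (0:ℝ) < (N : ℝ) / ((K:ℝ)*K) by positivity)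
    have h2 : (N : ℝ) / ((K:ℝ)*K) - 1 ≤ 2 / K := by
      rw [div_sub_one (ne_of_gt hKKr), div_le_div_iff₀ hKKr hKr]
      nlinarith
    linarith
  have hb1 : (N : ℝ) * Real.log N - 2 * N * Real.log K ≤ 6 * K := by
    have h1 : (N : ℝ) * (Real.log N - Real.log ((K:ℝ)*K)) ≤ (N : ℝ) * (2 / K) :=
      mul_le_mul_of_nonneg_left hDle (le_of_lt hNr)
    have h2 : (N : ℝ) * (2 / K) ≤ 6 * K := by
      rw [mul_div_assoc', div_le_iff₀ hKr]
      nlinarith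
    rw [hlogKK] at h1
    nlinarith [h1, h2]
  have hb2 : 0 ≤ (N : ℝ) * Real.log N - 2 * N * Real.log K := by
    have := mul_nonneg (le_of_lt hNr) hD0
    rw [hlogKK] at this
    nlinarith [this]
  have hc1 : (N : ℝ) - K * K ≤ 2 * K := by linarith
  have hc2 : (0 : ℝ) ≤ (N : ℝ) - K * K := by linarith
  rw [abs_le]
  constructor
  · linarith [ha2, hb1, hc2, hhyp, hsqrt]
  · linarith [ha1, hb2, hc1, hhyp, hsqrt]
theorem stmt_11 :
    ∃ C C' : ℝ, ∀ z : ℝ, 1 ≤ z →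
      |(∑ n ∈ Finset.Icc 1 ⌊z⌋₊, (n.divisors.card : ℝ)) - (z * Real.log z + C * z)| ≤
        C' * Real.sqrt z := by
  refine ⟨2 * Real.eulerMascheroniConstant - 1, 30, fun z hz => ?_⟩
  set C := 2 * Real.eulerMascheroniConstant - 1 with hC
  set N := ⌊z⌋₊ with hNdef
  have hz0 : (0 : ℝ) < z := by linarith
  have hN1 : 1 ≤ N := Nat.le_floor (by exact_mod_cast hz)
  have hNz : (N : ℝ) ≤ z := Nat.floor_le (le_of_lt hz0)
  have hzN : z < (N : ℝ) + 1 := Nat.lt_floor_add_one z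
  have hN1r : (1 : ℝ) ≤ N := by exact_mod_cast hN1
  have hNr : (0 : ℝ) < N := by linarith
  have hsz1 : (1 : ℝ) ≤ Real.sqrt z := by
    rw [show (1:ℝ) = Real.sqrt 1 from (Real.sqrt_one).symm]
    exact Real.sqrt_le_sqrt hz
  have hsqN : Real.sqrt N ≤ Real.sqrt z := Real.sqrt_le_sqrt hNz
  have hmain := main_nat N hN1
  have hlogN0 : 0 ≤ Real.log N := Real.log_nonneg hN1r
  have hlogzN : Real.log N ≤ Real.log z := Real.log_le_log hNr hNz
  have hlogz0 : 0 ≤ Real.log z := Real.log_nonneg hz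
  -- z log z - N log N ∈ [0, 2 + log z]
  have hmono : 0 ≤ z * Real.log z - (N : ℝ) * Real.log N := by
    nlinarith [mul_le_mul hNz hlogzN hlogN0 (le_of_lt hz0)]
  have hdiff : z * Real.log z - (N : ℝ) * Real.log N ≤ 2 + Real.log z := by
    have h1 : Real.log z - Real.log N ≤ z / N - 1 := by
      rw [← Real.log_div (ne_of_gt hz0) (ne_of_gt hNr)]
      exact Real.log_le_sub_one_of_pos (by positivity)
    have h2 : z * (Real.log z - Real.log N) ≤ z * (z / N - 1) :=
      mul_le_mul_of_nonneg_left h1 (le_of_lt hz0)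
    have h3 : z * (z / N - 1) ≤ 2 := by
      have hw : z / N - 1 ≤ 1 / N := by
        rw [div_sub_one (ne_of_gt hNr), div_le_div_iff₀ hNr hNr]
        nlinarith
      have hw2 : z * (z / N - 1) ≤ z * (1 / N) :=
        mul_le_mul_of_nonneg_left hw (le_of_lt hz0)
      have hw3 : z * (1 / N) ≤ 2 := by
        rw [mul_one_div, div_le_iff₀ hNr]
        nlinarith
      linarith
    have h4 : (z - N) * Real.log N ≤ Real.log z := by
      nlinarith [mul_le_mul_of_nonneg_right (show z - (N:ℝ) ≤ 1 by linarith) hlogN0]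
    nlinarith [h2, h3, h4]
  have hlogz : Real.log z ≤ 2 * Real.sqrt z := by
    have h1 : Real.log (Real.sqrt z) ≤ Real.sqrt z - 1 :=
      Real.log_le_sub_one_of_pos (by positivity)
    rw [Real.log_sqrt (le_of_lt hz0)] at h1
    linarith
  have hCb : |C| ≤ 1 := by
    rw [hC, abs_le]
    have h1 := Real.one_half_lt_eulerMascheroniConstant
    have h2 := Real.eulerMascheroniConstant_lt_two_thirds
    constructor <;> linarith
  have hCX : |C * ((N : ℝ) - z)| ≤ 1 := by
    rw [abs_mul]
    have h1 : |(N : ℝ) - z| ≤ 1 := by rw [abs_le]; constructor <;> linarith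
    calc |C| * |(N : ℝ) - z| ≤ 1 * 1 := mul_le_mul hCb h1 (abs_nonneg _) zero_le_one
      _ = 1 := by ring
  calc |(∑ n ∈ Finset.Icc 1 N, (n.divisors.card : ℝ)) - (z * Real.log z + C * z)|
      ≤ |(∑ n ∈ Finset.Icc 1 N, (n.divisors.card : ℝ))
          - ((N : ℝ) * Real.log N + C * N)|
        + |((N : ℝ) * Real.log N + C * N) - (z * Real.log z + C * z)| := abs_sub_le _ _ _
    _ ≤ 20 * Real.sqrt N + |((N : ℝ) * Real.log N + C * N) - (z * Real.log z + C * z)| := by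
        exact add_le_add_left hmain _
    _ ≤ 20 * Real.sqrt z + 10 * Real.sqrt z := by
        refine add_le_add (by linarith) ?_
        have hX : ((N : ℝ) * Real.log N + C * N) - (z * Real.log z + C * z)
            = -(z * Real.log z - (N : ℝ) * Real.log N) + C * ((N : ℝ) - z) := by ring
        rw [hX]
        have h5 := abs_le.1 hCX
        rw [abs_le]
        constructor <;> [linarith [hdiff, hlogz, h5.1]; linarith [hmono, hlogz, h5.2]]
    _ = 30 * Real.sqrt z := by ring
end

section
/- ∑_{n ≤ z} τ(n)/n = (1/2)·log²(z) + C₂·log(z) + C₃ + O(z^(−1/4)) for z ≥ 1, for some absolute constants C₂, C₃. -/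
set_option maxHeartbeats 1000000

open Finset Filter Real Asymptotics

noncomputable def Hc (x : ℝ) : ℝ := ∑ n ∈ Finset.Icc 1 ⌊x⌋₊, (n : ℝ)⁻¹

lemma Hc_eq (x : ℝ) : Hc x = (harmonic ⌊x⌋₊ : ℝ) := by
  rw [Hc, harmonic_eq_sum_Icc]
  push_cast
  rfl

lemma harm_est {x : ℝ} (hx : 1 ≤ x) :
    |Hc x - Real.log x - Real.eulerMascheroniConstant| ≤ 4 / x := by
  set n : ℕ := ⌊x⌋₊ with hn
  have hn1 : 1 ≤ n := Nat.le_floor (by exact_mod_cast hx)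
  have hnpos : (0 : ℝ) < n := by exact_mod_cast hn1
  have hxle : x < n + 1 := Nat.lt_floor_add_one x
  have hnx : (n : ℝ) ≤ x := Nat.floor_le (by linarith)
  have h1 : (harmonic n : ℝ) - Real.log (n+1) < Real.eulerMascheroniConstant := by
    have := Real.eulerMascheroniSeq_lt_eulerMascheroniConstant n
    rwa [Real.eulerMascheroniSeq] at this
  have h2 : Real.eulerMascheroniConstant < (harmonic n : ℝ) - Real.log n := by
    have := Real.eulerMascheroniConstant_lt_eulerMascheroniSeq' n
    rwa [Real.eulerMascheroniSeq', if_neg (by omega)] at this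
  have hlog1 : Real.log x ≤ Real.log n + 1 / n := by
    have : Real.log x - Real.log n = Real.log (x / n) := (Real.log_div (by linarith) (by positivity)).symm
    have h3 : Real.log (x / n) ≤ x / n - 1 := Real.log_le_sub_one_of_pos (by positivity)
    have : x / n - 1 ≤ 1 / n := by
      rw [div_sub_one (by positivity), div_le_div_iff₀ hnpos hnpos]
      nlinarith
    nlinarith [Real.log_le_sub_one_of_pos (show (0:ℝ) < x / n by positivity),
      (Real.log_div (show x ≠ 0 by linarith) (show (n:ℝ) ≠ 0 by positivity)).symm]
  have hlog2 : Real.log (n+1) ≤ Real.log n + 1 / n := by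
    have h3 : Real.log ((n+1) / n) ≤ (n+1) / n - 1 := Real.log_le_sub_one_of_pos (by positivity)
    rw [Real.log_div (by positivity) (by positivity)] at h3
    have : ((n:ℝ)+1) / n - 1 = 1 / n := by field_simp; ring
    linarith
  have hlogn : Real.log n ≤ Real.log x := Real.log_le_log (by positivity) hnx
  rw [Hc_eq, ← hn]
  have hn1R : (1:ℝ) ≤ n := by exact_mod_cast hn1
  have hb : 1 / (n:ℝ) ≤ 4 / x := by
    rw [div_le_div_iff₀ hnpos (by linarith)]
    linarith
  rw [abs_le]
  constructor
  · linarith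
  · linarith


noncomputable def fl (t : ℝ) : ℝ := Real.log t / t

lemma fl_contOn : ContinuousOn fl (Set.Ici (1:ℝ)) := by
  apply ContinuousOn.div
  · exact (Real.continuousOn_log).mono (by intro x hx; simp at hx ⊢; linarith)
  · exact continuousOn_id
  · intro x hx; simp at hx; intro h; simp [h] at hx; linarith

lemma fl_intable {a b : ℝ} (ha : 1 ≤ a) (hb : 1 ≤ b) :
    IntervalIntegrable fl MeasureTheory.volume a b := by
  apply (fl_contOn.mono ?_).intervalIntegrable
  intro x hx
  rcases le_total a b with h | h
  · rw [Set.uIcc_of_le h] at hx; exact le_trans ha hx.1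
  · rw [Set.uIcc_of_ge h] at hx; exact le_trans hb hx.1

lemma fl_ftc {a b : ℝ} (ha : 1 ≤ a) (hab : a ≤ b) :
    ∫ t in a..b, fl t = (Real.log b)^2/2 - (Real.log a)^2/2 := by
  apply intervalIntegral.integral_eq_sub_of_hasDerivAt (f := fun t => (Real.log t)^2/2)
  · intro t ht
    rw [Set.uIcc_of_le hab] at ht
    have ht1 : 1 ≤ t := le_trans ha ht.1
    have h1 : HasDerivAt Real.log t⁻¹ t := Real.hasDerivAt_log (by linarith)
    have h2 := (h1.pow 2).div_const 2
    refine h2.congr_deriv ?_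
    rw [fl]
    field_simp
    ring
  · exact fl_intable ha (le_trans ha hab)

lemma fl_anti : AntitoneOn fl (Set.Ici (3:ℝ)) := by
  have h3 : (1:ℝ) < Real.log 3 := by
    rw [Real.lt_log_iff_exp_lt (by norm_num)]
    have := Real.exp_one_lt_d9
    linarith
  have hd : ∀ t : ℝ, 3 < t → HasDerivAt fl ((t⁻¹ * t - Real.log t * 1) / t^2) t := by
    intro t ht
    exact (Real.hasDerivAt_log (by linarith : t ≠ 0)).div (hasDerivAt_id t) (by linarith)
  apply antitoneOn_of_deriv_nonpos (convex_Ici 3)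
  · exact fl_contOn.mono (by intro x hx; simp at hx ⊢; linarith)
  · intro t ht
    rw [interior_Ici] at ht
    exact (hd t ht).differentiableAt.differentiableWithinAt
  · intro t ht
    rw [interior_Ici] at ht
    simp only [Set.mem_Ioi] at ht
    have htpos : (0:ℝ) < t := by linarith
    rw [(hd t ht).deriv]
    have hlt : 1 ≤ Real.log t := le_of_lt (lt_of_lt_of_le h3 (Real.log_le_log (by norm_num) (le_of_lt ht)))
    have h2 : t⁻¹ * t = 1 := inv_mul_cancel₀ (ne_of_gt htpos)
    rw [h2]
    apply div_nonpos_of_nonpos_of_nonneg <;> nlinarith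

lemma fl_nonneg {t : ℝ} (ht : 1 ≤ t) : 0 ≤ fl t := by
  rw [fl]
  apply div_nonneg (Real.log_nonneg ht) (by linarith)

lemma fl_le_one {t : ℝ} (ht : 1 ≤ t) : fl t ≤ 1 := by
  rw [fl, div_le_one (by linarith)]
  have := Real.log_le_sub_one_of_pos (show (0:ℝ) < t by linarith)
  linarith

noncomputable def ga (k : ℕ) : ℝ := (∫ t in ((k:ℝ)+3)..((k:ℝ)+4), fl t) - fl ((k:ℝ)+4)

lemma ga_nonneg (k : ℕ) : 0 ≤ ga k := by
  rw [ga, sub_nonneg]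
  have h := intervalIntegral.integral_mono_on (a := ((k:ℝ)+3)) (b := ((k:ℝ)+4))
    (f := fun _ => fl ((k:ℝ)+4)) (g := fl) (by linarith)
    (intervalIntegrable_const) (fl_intable (by have : (0:ℝ) ≤ k := Nat.cast_nonneg k; linarith) (by have : (0:ℝ) ≤ k := Nat.cast_nonneg k; linarith)) ?_
  · rw [intervalIntegral.integral_const] at h
    simp only [smul_eq_mul] at h
    have e : ((k:ℝ)+4) - ((k:ℝ)+3) = 1 := by ring
    rw [e, one_mul] at h
    exact h
  · intro t ht
    have hk : (0:ℝ) ≤ k := Nat.cast_nonneg k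
    exact fl_anti (Set.mem_Ici.mpr (by linarith [ht.1])) (Set.mem_Ici.mpr (by linarith)) ht.2

lemma ga_le (k : ℕ) : ga k ≤ fl ((k:ℝ)+3) - fl ((k:ℝ)+4) := by
  rw [ga, sub_le_sub_iff_right]
  have h := intervalIntegral.integral_mono_on (a := ((k:ℝ)+3)) (b := ((k:ℝ)+4))
    (f := fl) (g := fun _ => fl ((k:ℝ)+3)) (by linarith)
    (fl_intable (by have : (0:ℝ) ≤ k := Nat.cast_nonneg k; linarith) (by have : (0:ℝ) ≤ k := Nat.cast_nonneg k; linarith)) (intervalIntegrable_const) ?_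
  · rw [intervalIntegral.integral_const] at h
    simp only [smul_eq_mul] at h
    have e : ((k:ℝ)+4) - ((k:ℝ)+3) = 1 := by ring
    rw [e, one_mul] at h
    exact h
  · intro t ht
    have hk : (0:ℝ) ≤ k := Nat.cast_nonneg k
    exact fl_anti (Set.mem_Ici.mpr (by linarith)) (Set.mem_Ici.mpr (by linarith [ht.1])) ht.1

lemma sum_ga_le (K m : ℕ) : ∑ k ∈ Finset.range m, ga (k + K) ≤ fl ((K:ℝ)+3) := by
  have h1 : ∑ k ∈ Finset.range m, ga (k + K) ≤
      ∑ k ∈ Finset.range m, (fl ((k:ℝ)+(K:ℝ)+3) - fl (((k:ℝ)+1)+(K:ℝ)+3)) := by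
    apply Finset.sum_le_sum
    intro k _
    have := ga_le (k + K)
    push_cast at this
    refine this.trans_eq ?_
    rw [show ((k:ℝ)+1+(K:ℝ)+3) = (k:ℝ)+(K:ℝ)+4 by ring]
  have h2 : ∑ k ∈ Finset.range m, (fl ((k:ℝ)+(K:ℝ)+3) - fl (((k:ℝ)+1)+(K:ℝ)+3))
      = fl ((0:ℝ)+(K:ℝ)+3) - fl ((m:ℝ)+(K:ℝ)+3) := by
    have := Finset.sum_range_sub' (f := fun k : ℕ => fl ((k:ℝ)+(K:ℝ)+3)) m
    push_cast at this ⊢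
    convert this using 2
  rw [h2] at h1
  have h3 : 0 ≤ fl ((m:ℝ)+(K:ℝ)+3) := fl_nonneg (by have : (0:ℝ) ≤ m := Nat.cast_nonneg m; have : (0:ℝ) ≤ K := Nat.cast_nonneg K; linarith)
  calc ∑ k ∈ Finset.range m, ga (k + K) ≤ _ := h1
    _ ≤ fl ((K:ℝ)+3) := by rw [zero_add]; linarith

lemma summable_ga : Summable ga := by
  apply summable_of_sum_range_le ga_nonneg
  intro m
  have := sum_ga_le 0 m
  simpa using this

lemma tsum_ga_tail_le (K : ℕ) : ∑' k, ga (k + K) ≤ fl ((K:ℝ)+3) :=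
  Real.tsum_le_of_sum_range_le (fun k => ga_nonneg (k + K)) (fun n => sum_ga_le K n)

noncomputable def c1 : ℝ := fl 1 + fl 2 + fl 3 - (Real.log 3)^2/2 - ∑' k, ga k

lemma B_nat {N : ℕ} (hN : 3 ≤ N) :
    ∑ n ∈ Finset.Icc 1 N, fl n = c1 + (Real.log N)^2/2 + ∑' k, ga (k + (N - 3)) := by
  have hK : N - 3 + 3 = N := by omega
  set K := N - 3 with hKdef
  have hNR : ((N:ℕ):ℝ) = (K:ℝ) + 3 := by
    rw [← hK]; push_cast; ring
  -- sum of integrals over adjacent intervals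
  have hadj : ∑ k ∈ Finset.range K, ∫ t in ((k:ℝ)+3)..((k:ℝ)+4), fl t
      = ∫ t in (3:ℝ)..((K:ℝ)+3), fl t := by
    have := intervalIntegral.sum_integral_adjacent_intervals (a := fun k : ℕ => (k:ℝ)+3)
      (n := K) (f := fl) (μ := MeasureTheory.volume) ?_
    · convert this using 2 with k
      · push_cast; ring_nf
      · norm_num
    · intro k _
      have hk : (0:ℝ) ≤ k := Nat.cast_nonneg k
      push_cast
      exact fl_intable (by linarith) (by linarith)
  -- partial sums of ga
  have hsum : ∑ k ∈ Finset.range K, ga k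
      = (∫ t in (3:ℝ)..((K:ℝ)+3), fl t) - ∑ k ∈ Finset.range K, fl ((k:ℝ)+4) := by
    rw [← hadj, ← Finset.sum_sub_distrib]
    rfl
  -- the Icc sum decomposition
  have hdec : ∑ n ∈ Finset.Icc 1 N, fl n
      = fl 1 + fl 2 + fl 3 + ∑ k ∈ Finset.range K, fl ((k:ℝ)+4) := by
    rw [← Finset.Ico_add_one_right_eq_Icc, Finset.sum_Ico_eq_sum_range]
    have hNe : N + 1 - 1 = 3 + K := by omega
    rw [hNe, Finset.sum_range_add]
    simp [Finset.sum_range_succ]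
    push_cast
    have e1 : ∑ x ∈ Finset.range K, fl (1 + (3 + (x:ℝ))) = ∑ k ∈ Finset.range K, fl ((k:ℝ) + 4) := by
      apply Finset.sum_congr rfl
      intro x _
      norm_num
      ring_nf
    rw [e1]
    norm_num
  -- FTC value
  have hftc : ∫ t in (3:ℝ)..((K:ℝ)+3), fl t = (Real.log ((K:ℝ)+3))^2/2 - (Real.log 3)^2/2 := by
    apply fl_ftc (by norm_num)
    have : (0:ℝ) ≤ K := Nat.cast_nonneg K
    linarith
  -- tsum split
  have hsplit : ∑' k, ga k = ∑ k ∈ Finset.range K, ga k + ∑' k, ga (k + K) :=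
    (Summable.sum_add_tsum_nat_add K summable_ga).symm
  rw [hdec, c1, hNR]
  rw [hsplit]
  rw [hsum, hftc]
  ring

lemma log3_le_two : Real.log 3 ≤ 2 := by
  have := Real.log_le_sub_one_of_pos (show (0:ℝ) < 3 by norm_num)
  linarith

lemma c1_bound : |c1| ≤ 6 := by
  have hS : (0:ℝ) ≤ ∑' k, ga k := tsum_nonneg ga_nonneg
  have hS2 : ∑' k, ga k ≤ fl 3 := by
    have := tsum_ga_tail_le 0
    simpa using this
  have h1 : fl 1 = 0 := by simp [fl]
  have h2 : (0:ℝ) ≤ fl 2 := fl_nonneg (by norm_num)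
  have h3 : fl 2 ≤ 1 := fl_le_one (by norm_num)
  have h4 : (0:ℝ) ≤ fl 3 := fl_nonneg (by norm_num)
  have h5 : fl 3 ≤ 1 := fl_le_one (by norm_num)
  have h6 : (0:ℝ) ≤ Real.log 3 := Real.log_nonneg (by norm_num)
  have h7 := log3_le_two
  rw [c1, abs_le]
  constructor <;> nlinarith

lemma B_est {x : ℝ} (hx : 1 ≤ x) :
    |(∑ n ∈ Finset.Icc 1 ⌊x⌋₊, fl n) - ((Real.log x)^2/2 + c1)| ≤ 30 * (Real.log x + 1) / x := by
  have hxpos : (0:ℝ) < x := by linarith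
  have hL0 : 0 ≤ Real.log x := Real.log_nonneg hx
  rcases le_or_gt 3 x with h3 | h3
  · set N : ℕ := ⌊x⌋₊ with hNdef
    have hN3 : 3 ≤ N := Nat.le_floor (by exact_mod_cast h3)
    have hNx : (N:ℝ) ≤ x := Nat.floor_le (by linarith)
    have hxN : x < N + 1 := Nat.lt_floor_add_one x
    have hN3R : (3:ℝ) ≤ N := by exact_mod_cast hN3
    have hNpos : (0:ℝ) < N := by linarith
    rw [B_nat hN3]
    set T := ∑' k, ga (k + (N - 3)) with hT
    have hT0 : 0 ≤ T := tsum_nonneg (fun k => ga_nonneg _)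
    have hTle : T ≤ fl N := by
      have := tsum_ga_tail_le (N - 3)
      have hc : ((N - 3 : ℕ):ℝ) + 3 = (N:ℝ) := by
        have : (N:ℕ) - 3 + 3 = N := by omega
        rw [← this]; push_cast; ring
      rwa [hc] at this
    set L := Real.log x with hLdef
    set M := Real.log N with hMdef
    have hML : M ≤ L := Real.log_le_log hNpos hNx
    have hM0 : 0 ≤ M := Real.log_nonneg (by linarith)
    have hLM : L ≤ M + 1/N := by
      have h5 : Real.log (x / N) ≤ x / N - 1 := Real.log_le_sub_one_of_pos (by positivity)
      rw [Real.log_div (by linarith) (by linarith)] at h5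
      have : x / N - 1 ≤ 1 / N := by
        rw [div_sub_one (by linarith), div_le_div_iff₀ hNpos hNpos]
        nlinarith
      linarith
    have hflN : fl N ≤ L / N := by
      rw [fl]
      gcongr
    have hd : (L - M)*(L + M) ≤ (1/N)*(2*L) :=
      mul_le_mul (by linarith) (by linarith) (by linarith) (by positivity)
    have h9 : (L^2 - M^2)/2 ≤ L/N := by
      calc (L^2 - M^2)/2 = (L - M)*(L + M)/2 := by ring
        _ ≤ (1/N)*(2*L)/2 := by linarith
        _ = L/N := by ring
    have h10 : 0 ≤ L^2 - M^2 := by nlinarith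
    have hkey : |c1 + M^2/2 + T - (L^2/2 + c1)| ≤ L / N := by
      rw [abs_le]
      constructor
      · linarith
      · have : T ≤ L/N := le_trans hTle hflN
        linarith
    refine le_trans hkey ?_
    rw [div_le_div_iff₀ hNpos hxpos]
    nlinarith [mul_le_mul_of_nonneg_left (show x ≤ 2*(N:ℝ) by linarith) hL0]
  · set N : ℕ := ⌊x⌋₊ with hNdef
    have hN1 : 1 ≤ N := Nat.le_floor (by exact_mod_cast hx)
    have hN2 : N ≤ 2 := by
      have h1 : (N:ℝ) ≤ x := Nat.floor_le (by linarith)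
      have h2 : (N:ℝ) < 3 := by linarith
      have h4 : N < 3 := by exact_mod_cast h2
      omega
    have hsum0 : (0:ℝ) ≤ ∑ n ∈ Finset.Icc 1 N, fl n := by
      apply Finset.sum_nonneg
      intro n hn
      simp at hn
      exact fl_nonneg (by exact_mod_cast hn.1)
    have hsum2 : ∑ n ∈ Finset.Icc 1 N, fl n ≤ 2 := by
      have hf1 : fl ((1:ℕ):ℝ) = 0 := by norm_num [fl]
      have hf2 : fl ((2:ℕ):ℝ) ≤ 1 := by
        have := fl_le_one (show (1:ℝ) ≤ ((2:ℕ):ℝ) by norm_num)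
        exact this
      interval_cases N
      · rw [show Finset.Icc 1 1 = {1} from rfl, Finset.sum_singleton]
        rw [hf1]; norm_num
      · rw [show Finset.Icc 1 2 = {1, 2} from rfl, Finset.sum_insert (by decide),
          Finset.sum_singleton]
        rw [hf1]; linarith
    have hlx : Real.log x ≤ 2 := by
      have := Real.log_le_log hxpos (le_of_lt h3 : x ≤ 3)
      linarith [log3_le_two]
    have hc := c1_bound
    have hrhs : (10:ℝ) ≤ 30 * (Real.log x + 1) / x := by
      rw [le_div_iff₀ hxpos]
      nlinarith
    have hL2 : (Real.log x)^2 ≤ 4 := by nlinarith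
    have hLsq : 0 ≤ (Real.log x)^2 := sq_nonneg _
    rw [abs_le] at hc ⊢
    constructor
    · linarith
    · linarith


lemma stepA (N : ℕ) :
    ∑ n ∈ Finset.Icc 1 N, (n.divisors.card : ℝ)/n
      = ∑ p ∈ ((Finset.Icc 1 N ×ˢ Finset.Icc 1 N).filter (fun p : ℕ×ℕ => p.1*p.2 ≤ N)),
          ((p.1 : ℝ) * p.2)⁻¹ := by
  have h1 : ∀ n ∈ Finset.Icc 1 N, (n.divisors.card : ℝ)/n = ∑ _d ∈ n.divisors, ((n:ℝ))⁻¹ := by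
    intro n hn
    rw [Finset.sum_const, nsmul_eq_mul, div_eq_mul_inv]
  rw [Finset.sum_congr rfl h1, Finset.sum_sigma']
  apply Finset.sum_nbij' (i := fun x : Σ _n : ℕ, ℕ => (x.2, x.1/x.2))
    (j := fun p : ℕ × ℕ => ⟨p.1*p.2, p.1⟩)
  · intro x hx
    simp only [Finset.mem_sigma, Finset.mem_Icc, Nat.mem_divisors] at hx
    obtain ⟨⟨h1n, h2n⟩, hdvd, hne⟩ := hx
    simp only [Finset.mem_filter, Finset.mem_product, Finset.mem_Icc]
    have hd1 : 1 ≤ x.2 := Nat.one_le_iff_ne_zero.mpr (by intro h0; rw [h0] at hdvd; have := Nat.zero_dvd.mp hdvd; omega)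
    have hq1 : 1 ≤ x.1 / x.2 := Nat.one_le_div_iff (by omega) |>.mpr (Nat.le_of_dvd (by omega) hdvd)
    have heq : x.2 * (x.1 / x.2) = x.1 := Nat.mul_div_cancel' hdvd
    refine ⟨⟨⟨hd1, ?_⟩, ⟨hq1, ?_⟩⟩, ?_⟩
    · exact le_trans (Nat.le_of_dvd (by omega) hdvd) h2n
    · exact le_trans (Nat.div_le_self _ _) h2n
    · rw [heq]; exact h2n
  · intro p hp
    simp only [Finset.mem_filter, Finset.mem_product, Finset.mem_Icc] at hp
    obtain ⟨⟨⟨h11, _⟩, ⟨h21, _⟩⟩, hle⟩ := hp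
    simp only [Finset.mem_sigma, Finset.mem_Icc, Nat.mem_divisors]
    exact ⟨⟨Nat.one_le_iff_ne_zero.mpr (by positivity), hle⟩, ⟨Dvd.intro _ rfl, by positivity⟩⟩
  · intro x hx
    simp only [Finset.mem_sigma, Finset.mem_Icc, Nat.mem_divisors] at hx
    obtain ⟨⟨h1n, h2n⟩, hdvd, hne⟩ := hx
    have heq : x.2 * (x.1 / x.2) = x.1 := Nat.mul_div_cancel' hdvd
    simp [Sigma.ext_iff, heq]
  · intro p hp
    simp only [Finset.mem_filter, Finset.mem_product, Finset.mem_Icc] at hp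
    obtain ⟨⟨⟨h11, _⟩, _⟩, _⟩ := hp
    simp [Nat.mul_div_cancel_left _ (by omega : 0 < p.1)]
  · intro x hx
    simp only [Finset.mem_sigma, Finset.mem_Icc, Nat.mem_divisors] at hx
    obtain ⟨⟨h1n, h2n⟩, hdvd, hne⟩ := hx
    have heq : x.2 * (x.1 / x.2) = x.1 := Nat.mul_div_cancel' hdvd
    simp only
    congr 1
    rw [← Nat.cast_mul]
    exact_mod_cast congrArg (Nat.cast (R := ℝ)) heq.symm

lemma filter_Icc_div {N d : ℕ} (hd : 1 ≤ d) :
    (Finset.Icc 1 N).filter (fun m => d*m ≤ N) = Finset.Icc 1 (N/d) := by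
  ext m
  simp only [Finset.mem_filter, Finset.mem_Icc]
  constructor
  · rintro ⟨⟨h1, _⟩, h3⟩
    rw [Nat.mul_comm] at h3
    exact ⟨h1, (Nat.le_div_iff_mul_le (by omega)).mpr h3⟩
  · rintro ⟨h1, h2⟩
    have h3 := (Nat.le_div_iff_mul_le (show 0 < d by omega)).mp h2
    have h4 : m ≤ m * d := Nat.le_mul_of_pos_right m (by omega)
    exact ⟨⟨h1, by omega⟩, by rw [Nat.mul_comm d m]; exact h3⟩

lemma sumA_eq (N D : ℕ) :
    ∑ p ∈ ((Finset.Icc 1 D ×ˢ Finset.Icc 1 N).filter (fun p : ℕ×ℕ => p.1*p.2 ≤ N)),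
        ((p.1 : ℝ) * p.2)⁻¹
      = ∑ d ∈ Finset.Icc 1 D, (d:ℝ)⁻¹ * ∑ m ∈ Finset.Icc 1 (N/d), (m:ℝ)⁻¹ := by
  rw [Finset.sum_filter, Finset.sum_product]
  apply Finset.sum_congr rfl
  intro d hd
  simp only [Finset.mem_Icc] at hd
  rw [← Finset.sum_filter, filter_Icc_div hd.1, Finset.mul_sum]
  apply Finset.sum_congr rfl
  intro m _
  rw [mul_inv]

lemma hyperbola_s12 (N D : ℕ) (hD1 : 1 ≤ D) (hDN : D*D ≤ N) (hND : N < (D+1)*(D+1)) :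
    ∑ n ∈ Finset.Icc 1 N, (n.divisors.card : ℝ)/n
      = 2 * (∑ d ∈ Finset.Icc 1 D, (d:ℝ)⁻¹ * ∑ m ∈ Finset.Icc 1 (N/d), (m:ℝ)⁻¹)
        - (∑ d ∈ Finset.Icc 1 D, (d:ℝ)⁻¹)^2 := by
  classical
  have hDN' : D ≤ N := le_trans (Nat.le_mul_of_pos_right D (by omega)) hDN
  set f : ℕ×ℕ → ℝ := fun p => ((p.1:ℝ)*p.2)⁻¹ with hf
  set A := (Finset.Icc 1 D ×ˢ Finset.Icc 1 N).filter (fun p : ℕ×ℕ => p.1*p.2 ≤ N) with hA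
  set B := (Finset.Icc 1 N ×ˢ Finset.Icc 1 D).filter (fun p : ℕ×ℕ => p.1*p.2 ≤ N) with hB
  have h_union : A ∪ B = (Finset.Icc 1 N ×ˢ Finset.Icc 1 N).filter (fun p : ℕ×ℕ => p.1*p.2 ≤ N) := by
    ext p
    simp only [hA, hB, Finset.mem_union, Finset.mem_filter, Finset.mem_product, Finset.mem_Icc]
    constructor
    · rintro (⟨⟨⟨a1, a2⟩, ⟨b1, b2⟩⟩, hle⟩ | ⟨⟨⟨a1, a2⟩, ⟨b1, b2⟩⟩, hle⟩)
      · exact ⟨⟨⟨a1, by omega⟩, ⟨b1, b2⟩⟩, hle⟩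
      · exact ⟨⟨⟨a1, a2⟩, ⟨b1, by omega⟩⟩, hle⟩
    · rintro ⟨⟨⟨a1, a2⟩, ⟨b1, b2⟩⟩, hle⟩
      by_cases hc : p.1 ≤ D
      · exact Or.inl ⟨⟨⟨a1, hc⟩, ⟨b1, b2⟩⟩, hle⟩
      · refine Or.inr ⟨⟨⟨a1, a2⟩, ⟨b1, ?_⟩⟩, hle⟩
        by_contra hc2
        push_neg at hc hc2
        have : (D+1)*(D+1) ≤ p.1 * p.2 := Nat.mul_le_mul hc hc2
        omega
  have h_inter : A ∩ B = Finset.Icc 1 D ×ˢ Finset.Icc 1 D := by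
    ext p
    simp only [hA, hB, Finset.mem_inter, Finset.mem_filter, Finset.mem_product, Finset.mem_Icc]
    constructor
    · rintro ⟨⟨⟨⟨a1, a2⟩, ⟨b1, _⟩⟩, _⟩, ⟨⟨_, ⟨_, b2⟩⟩, _⟩⟩
      exact ⟨⟨a1, a2⟩, ⟨b1, b2⟩⟩
    · rintro ⟨⟨a1, a2⟩, ⟨b1, b2⟩⟩
      have hmul : p.1 * p.2 ≤ N := le_trans (Nat.mul_le_mul a2 b2) hDN
      exact ⟨⟨⟨⟨a1, by omega⟩, ⟨b1, by omega⟩⟩, hmul⟩, ⟨⟨⟨a1, by omega⟩, ⟨b1, by omega⟩⟩, hmul⟩⟩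
  have h_ie : ∑ p ∈ A ∪ B, f p + ∑ p ∈ A ∩ B, f p = ∑ p ∈ A, f p + ∑ p ∈ B, f p :=
    Finset.sum_union_inter
  have hBA : ∑ p ∈ B, f p = ∑ p ∈ A, f p := by
    apply Finset.sum_nbij' (i := Prod.swap) (j := Prod.swap)
    · intro p hp
      simp only [hA, hB, Finset.mem_filter, Finset.mem_product] at hp ⊢
      exact ⟨⟨hp.1.2, hp.1.1⟩, by rw [Nat.mul_comm]; exact hp.2⟩
    · intro p hp
      simp only [hA, hB, Finset.mem_filter, Finset.mem_product] at hp ⊢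
      exact ⟨⟨hp.1.2, hp.1.1⟩, by rw [Nat.mul_comm]; exact hp.2⟩
    · intro p _; simp
    · intro p _; simp
    · intro p _
      simp only [hf, Prod.fst_swap, Prod.snd_swap]
      rw [mul_comm]
  have h_sq : ∑ p ∈ Finset.Icc 1 D ×ˢ Finset.Icc 1 D, f p
      = (∑ d ∈ Finset.Icc 1 D, (d:ℝ)⁻¹)^2 := by
    rw [Finset.sum_product, sq]
    have hrow : ∀ d ∈ Finset.Icc 1 D, ∑ m ∈ Finset.Icc 1 D, f (d, m)
        = (d:ℝ)⁻¹ * ∑ m ∈ Finset.Icc 1 D, (m:ℝ)⁻¹ := by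
      intro d _
      rw [Finset.mul_sum]
      exact Finset.sum_congr rfl (fun m _ => mul_inv _ _)
    rw [Finset.sum_congr rfl hrow, ← Finset.sum_mul]
  have hA_eq := sumA_eq N D
  rw [stepA, ← h_union]
  have hgoal : ∑ p ∈ A ∪ B, f p = ∑ p ∈ A, f p + ∑ p ∈ B, f p - ∑ p ∈ A ∩ B, f p := by
    linarith [h_ie]
  rw [show (∑ p ∈ A ∪ B, (((p.1:ℕ):ℝ) * p.2)⁻¹) = ∑ p ∈ A ∪ B, f p from rfl, hgoal, hBA,
    h_inter, h_sq]
  rw [show (∑ p ∈ A, f p) = ∑ p ∈ (Finset.Icc 1 D ×ˢ Finset.Icc 1 N).filter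
      (fun p : ℕ×ℕ => p.1*p.2 ≤ N), (((p.1:ℕ):ℝ) * p.2)⁻¹ from rfl, hA_eq]
  ring

theorem stmt_12 :
    ∃ C₂ C₃ C : ℝ, ∀ z : ℝ, 1 ≤ z →
      |(∑ n ∈ Finset.Icc 1 ⌊z⌋₊, (n.divisors.card : ℝ) / n) -
          ((1 / 2) * (Real.log z) ^ 2 + C₂ * Real.log z + C₃)| ≤ C * z ^ (-(1 / 4) : ℝ) := by
  set γ := Real.eulerMascheroniConstant with hγ
  refine ⟨2 * γ, γ^2 - 2*c1, 300, fun z hz => ?_⟩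
  have hz0 : (0:ℝ) < z := by linarith
  set w : ℝ := z ^ ((1:ℝ)/4) with hw
  have hw1 : 1 ≤ w := Real.one_le_rpow hz (by norm_num)
  have hw0 : (0:ℝ) < w := by linarith
  have hsqw : Real.sqrt z = w^2 := by
    rw [Real.sqrt_eq_rpow, hw, ← Real.rpow_natCast (z ^ ((1:ℝ)/4)) 2, ← Real.rpow_mul hz0.le]
    norm_num
  have hw4 : w^4 = z := by
    rw [hw, ← Real.rpow_natCast (z ^ ((1:ℝ)/4)) 4, ← Real.rpow_mul hz0.le]
    norm_num
  set u : ℝ := w⁻¹ with hu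
  have hu0 : 0 < u := by positivity
  have hu1 : u ≤ 1 := by rw [hu]; exact inv_le_one_of_one_le₀ hw1
  have hwu : w * u = 1 := mul_inv_cancel₀ (ne_of_gt hw0)
  have hrpow : z ^ (-(1 / 4) : ℝ) = u := by
    rw [Real.rpow_neg hz0.le, hu, hw]
  -- setup N, D
  set N : ℕ := ⌊z⌋₊ with hN
  set D : ℕ := ⌊Real.sqrt z⌋₊ with hD
  have hsz1 : 1 ≤ Real.sqrt z := by
    rw [show (1:ℝ) = Real.sqrt 1 by simp]
    exact Real.sqrt_le_sqrt hz
  have hszz : Real.sqrt z ≤ z := by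
    nlinarith [Real.sq_sqrt hz0.le, Real.sqrt_nonneg z]
  have hD1 : 1 ≤ D := Nat.le_floor (by exact_mod_cast hsz1)
  have hDR : (D:ℝ) ≤ Real.sqrt z := Nat.floor_le (by linarith)
  have hDR' : Real.sqrt z < D + 1 := Nat.lt_floor_add_one _
  have hsq : Real.sqrt z * Real.sqrt z = z := Real.mul_self_sqrt hz0.le
  have hDN : D * D ≤ N := by
    apply Nat.le_floor
    push_cast
    nlinarith
  have hND : N < (D+1)*(D+1) := by
    have h1 : (N:ℝ) ≤ z := Nat.floor_le hz0.le
    have h2 : z < ((D:ℝ)+1)*((D:ℝ)+1) := by nlinarith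
    have := lt_of_le_of_lt h1 h2
    exact_mod_cast this
  have hid := hyperbola_s12 N D hD1 hDN hND
  -- rewrite inner sums as Hc (z/d)
  have hinner : ∀ d ∈ Finset.Icc 1 D, (d:ℝ)⁻¹ * ∑ m ∈ Finset.Icc 1 (N/d), (m:ℝ)⁻¹
      = (d:ℝ)⁻¹ * Hc (z/d) := by
    intro d hd
    rw [Hc, Nat.floor_div_natCast]
  rw [Finset.sum_congr rfl hinner] at hid
  have hHs : (∑ d ∈ Finset.Icc 1 D, (d:ℝ)⁻¹) = Hc (Real.sqrt z) := by rw [Hc]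
  rw [hHs] at hid
  -- decompose each term
  set a : ℝ := Real.log z with ha
  have ha0 : 0 ≤ a := Real.log_nonneg hz
  have hterm : ∀ d ∈ Finset.Icc 1 D, (d:ℝ)⁻¹ * Hc (z/d)
      = (a + γ) * (d:ℝ)⁻¹ - fl d + (d:ℝ)⁻¹ * (Hc (z/d) - (Real.log (z/d) + γ)) := by
    intro d hd
    simp only [Finset.mem_Icc] at hd
    have hd1 : (1:ℝ) ≤ d := by exact_mod_cast hd.1
    have hlogd : Real.log (z/d) = a - Real.log d := Real.log_div (ne_of_gt hz0) (by linarith)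
    rw [fl, hlogd]
    field_simp
    ring
  rw [Finset.sum_congr rfl hterm] at hid
  rw [Finset.sum_add_distrib, Finset.sum_sub_distrib, ← Finset.mul_sum] at hid
  rw [hHs] at hid
  set Hs : ℝ := Hc (Real.sqrt z) with hHsd
  set Bs : ℝ := ∑ d ∈ Finset.Icc 1 D, fl d with hBs
  set E' : ℝ := ∑ d ∈ Finset.Icc 1 D, (d:ℝ)⁻¹ * (Hc (z/d) - (Real.log (z/d) + γ)) with hE'
  -- estimates
  have he1 : |Hs - (a/2 + γ)| ≤ 4 * u^2 := by
    have := harm_est hsz1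
    rw [Real.log_sqrt hz0.le] at this
    have h2 : 4 / Real.sqrt z = 4 * u^2 := by
      rw [hsqw, hu]
      field_simp
    rw [← h2]
    calc |Hs - (a/2 + γ)| = |Hc (Real.sqrt z) - a / 2 - γ| := by rw [hHsd]; ring_nf
      _ ≤ 4 / Real.sqrt z := this
  have he2 : |Bs - (a^2/8 + c1)| ≤ 30 * (a/2 + 1) * u^2 := by
    have := B_est hsz1
    rw [Real.log_sqrt hz0.le] at this
    have h2 : 30 * (a/2 + 1) / Real.sqrt z = 30 * (a/2 + 1) * u^2 := by
      rw [hsqw, hu]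
      field_simp
    rw [← h2]
    calc |Bs - (a^2/8 + c1)| = |(∑ n ∈ Finset.Icc 1 ⌊Real.sqrt z⌋₊, fl n) - ((a/2)^2/2 + c1)| := by
          rw [hBs, hD]; ring_nf
      _ ≤ 30 * (a/2 + 1) / Real.sqrt z := this
  have heE : |E'| ≤ 4 * u^2 := by
    have hbd : ∀ d ∈ Finset.Icc 1 D, |(d:ℝ)⁻¹ * (Hc (z/d) - (Real.log (z/d) + γ))| ≤ 4/z := by
      intro d hd
      simp only [Finset.mem_Icc] at hd
      have hd1 : (1:ℝ) ≤ d := by exact_mod_cast hd.1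
      have hdD : (d:ℝ) ≤ D := by exact_mod_cast hd.2
      have hdz : (d:ℝ) ≤ z := by linarith
      have hzd1 : 1 ≤ z / d := (one_le_div (by linarith)).mpr hdz
      have hest := harm_est hzd1
      rw [abs_mul, abs_inv, abs_of_nonneg (by linarith : (0:ℝ) ≤ (d:ℝ))]
      have heq : (d:ℝ)⁻¹ * (4 / (z/d)) = 4/z := by field_simp
      calc (d:ℝ)⁻¹ * |Hc (z/d) - (Real.log (z/d) + γ)|
          ≤ (d:ℝ)⁻¹ * (4 / (z/d)) := by
            apply mul_le_mul_of_nonneg_left ?_ (by positivity)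
            calc |Hc (z/d) - (Real.log (z/d) + γ)| = |Hc (z/d) - Real.log (z/d) - γ| := by ring_nf
              _ ≤ 4 / (z/d) := hest
        _ = 4/z := heq
    calc |E'| ≤ ∑ d ∈ Finset.Icc 1 D, |(d:ℝ)⁻¹ * (Hc (z/d) - (Real.log (z/d) + γ))| :=
          Finset.abs_sum_le_sum_abs _ _
      _ ≤ ∑ _d ∈ Finset.Icc 1 D, 4/z := Finset.sum_le_sum hbd
      _ = D * (4/z) := by rw [Finset.sum_const, Nat.card_Icc, Nat.add_sub_cancel, nsmul_eq_mul]
      _ ≤ 4 * u^2 := by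
        refine le_trans (mul_le_mul_of_nonneg_right hDR (by positivity)) ?_
        rw [hsqw, ← hw4, hu]
        rw [show w^2 * (4 / w^4) = 4 * (w⁻¹)^2 from by field_simp]
  -- error decomposition
  set e1 : ℝ := Hs - (a/2 + γ) with he1d
  set e2 : ℝ := Bs - (a^2/8 + c1) with he2d
  have hkey : (∑ n ∈ Finset.Icc 1 N, (n.divisors.card : ℝ)/n)
      - ((1/2) * a^2 + (2*γ) * a + (γ^2 - 2*c1))
      = a * e1 - e1^2 - 2*e2 + 2*E' := by
    rw [hid, he1d, he2d]
    ring
  -- log bound : a ≤ 4w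
  have haw : a ≤ 4 * w := by
    have h1 : Real.log w = a/4 := by
      rw [hw, Real.log_rpow hz0]
      ring
    have h2 : Real.log w ≤ w - 1 := Real.log_le_sub_one_of_pos hw0
    linarith
  -- final bound
  rw [hkey, hrpow]
  have habs : |a * e1 - e1^2 - 2*e2 + 2*E'| ≤ a * |e1| + |e1|^2 + 2*|e2| + 2*|E'| := by
    have h1 : |a * e1| = a * |e1| := by rw [abs_mul, abs_of_nonneg ha0]
    have h2 : |e1^2| = |e1|^2 := by rw [sq_abs, abs_of_nonneg (sq_nonneg e1)]
    calc |a * e1 - e1^2 - 2*e2 + 2*E'| ≤ |a * e1 - e1^2 - 2*e2| + |2*E'| := abs_add_le _ _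
      _ ≤ |a * e1 - e1^2| + |2*e2| + |2*E'| := by linarith [abs_sub (a*e1 - e1^2) (2*e2)]
      _ ≤ |a * e1| + |e1^2| + |2*e2| + |2*E'| := by linarith [abs_sub (a*e1) (e1^2)]
      _ = a * |e1| + |e1|^2 + 2*|e2| + 2*|E'| := by
          rw [h1, h2, abs_mul, abs_mul]
          norm_num
  refine le_trans habs ?_
  have hb1 : a * |e1| ≤ 16 * u := by
    have : a * |e1| ≤ (4*w) * (4*u^2) :=
      mul_le_mul haw he1 (abs_nonneg _) (by positivity)
    calc a * |e1| ≤ (4*w) * (4*u^2) := this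
      _ = 16 * (w*u) * u := by ring
      _ = 16 * u := by rw [hwu]; ring
  have hb2 : |e1|^2 ≤ 16 * u := by
    have h1 : |e1|^2 ≤ (4*u^2)^2 := by
      apply sq_le_sq' ?_ he1
      linarith [abs_nonneg e1]
    have h2 : (4*u^2)^2 = 16 * u^4 := by ring
    have h3 : u^4 ≤ u := by
      simpa using pow_le_pow_of_le_one hu0.le hu1 (by norm_num : 1 ≤ 4)
    linarith
  have hb3 : 2*|e2| ≤ 180 * u := by
    have h1 : 2*|e2| ≤ 2 * (30 * (a/2 + 1) * u^2) := by linarith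
    have h2 : 2 * (30 * (a/2 + 1) * u^2) = (30*a + 60) * u^2 := by ring
    have h3 : (30*a + 60) * u^2 ≤ (120*w + 60*w) * u^2 := by
      apply mul_le_mul_of_nonneg_right ?_ (by positivity)
      linarith
    have h4 : (120*w + 60*w) * u^2 = 180 * (w*u) * u := by ring
    rw [h4, hwu] at h3
    linarith
  have hb4 : 2*|E'| ≤ 8 * u := by
    have h1 : 2*|E'| ≤ 8 * u^2 := by linarith
    nlinarith
  linarith
end

section
/- The partial sums ∑_{d ≤ x} μ(d)/d are bounded: ∑_{d ≤ x} μ(d)/d = O(1); in fact |∑_{d ≤ x} μ(d)/d| ≤ 1 for all x ≥ 1. -/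
open Finset Filter Real Asymptotics

section Aux
open Finset ArithmeticFunction
open scoped ArithmeticFunction.Moebius

lemma key_int (N : ℕ) (hN : 1 ≤ N) :
    ∑ d ∈ Icc 1 N, (μ d : ℤ) * ((N / d : ℕ) : ℤ) = 1 := by
  have h1 : ∀ d ∈ Icc 1 N, (μ d : ℤ) * ((N / d : ℕ) : ℤ)
      = ∑ _n ∈ (Icc 1 N).filter (d ∣ ·), (μ d : ℤ) := by
    intro d hd
    rw [Finset.sum_const, ← Nat.Ioc_filter_dvd_card_eq_div N d,
      show Icc 1 N = Ioc 0 N from by rw [← Finset.Icc_add_one_left_eq_Ioc, zero_add]]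
    ring
  rw [Finset.sum_congr rfl h1, Finset.sum_comm' (t' := Icc 1 N)
    (s' := fun n => n.divisors) ?hcomm]
  · have h2 : ∀ n ∈ Icc 1 N, ∑ d ∈ n.divisors, (μ d : ℤ)
        = (1 : ArithmeticFunction ℤ) n := by
      intro n _
      rw [← moebius_mul_coe_zeta, coe_mul_zeta_apply]
    rw [Finset.sum_congr rfl h2, Finset.sum_eq_single 1]
    · simp
    · intro b _ hb1
      exact ArithmeticFunction.one_apply_ne hb1
    · intro h; exact absurd (Finset.mem_Icc.2 ⟨le_refl 1, hN⟩) h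
  · intro d n
    simp only [Finset.mem_filter, Finset.mem_Icc, Nat.mem_divisors]
    constructor
    · rintro ⟨_, ⟨hn1, hnN⟩, hdvd⟩
      exact ⟨⟨hdvd, by omega⟩, hn1, hnN⟩
    · rintro ⟨⟨hdvd, hn0⟩, hn1, hnN⟩
      have hd1 : 1 ≤ d := Nat.pos_of_dvd_of_pos hdvd (by omega)
      exact ⟨⟨hd1, (Nat.le_of_dvd (by omega) hdvd).trans hnN⟩, ⟨hn1, hnN⟩, hdvd⟩

lemma key_real (N : ℕ) (hN : 1 ≤ N) :
    |∑ d ∈ Icc 1 N, (μ d : ℝ) / d| ≤ 1 := by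
  have hN0 : (0 : ℝ) < N := by exact_mod_cast hN
  set S := ∑ d ∈ Icc 1 N, (μ d : ℝ) / d with hS
  have hInt : ∑ d ∈ Icc 1 N, (μ d : ℝ) * ((N / d : ℕ) : ℝ) = 1 := by
    have h := congrArg (Int.cast : ℤ → ℝ) (key_int N hN)
    push_cast at h
    exact h
  have key : (N : ℝ) * S - 1
      = ∑ d ∈ Icc 1 N, (μ d : ℝ) * ((N : ℝ) / d - ((N / d : ℕ) : ℝ)) := by
    rw [hS, Finset.mul_sum, ← hInt, ← Finset.sum_sub_distrib]
    refine Finset.sum_congr rfl fun d hd => ?_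
    have hd1 : (1 : ℕ) ≤ d := (Finset.mem_Icc.1 hd).1
    have hd0 : (d : ℝ) ≠ 0 := by positivity
    field_simp
  -- bound each fractional part
  have hfrac : ∀ d ∈ Icc 1 N, |(μ d : ℝ) * ((N : ℝ) / d - ((N / d : ℕ) : ℝ))| ≤ 1 := by
    intro d hd
    have hd1 : (1 : ℕ) ≤ d := (Finset.mem_Icc.1 hd).1
    have hdR : (0 : ℝ) < d := by exact_mod_cast hd1
    have h1 : ((N / d : ℕ) : ℝ) ≤ (N : ℝ) / d := Nat.cast_div_le
    have h2 : (N : ℝ) / d < ((N / d : ℕ) : ℝ) + 1 := by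
      rw [div_lt_iff₀ hdR]
      have hmod : ((N % d : ℕ) : ℝ) < d := by
        exact_mod_cast Nat.mod_lt N (show 0 < d by omega)
      have hdiv : (N : ℝ) = d * ((N / d : ℕ) : ℝ) + ((N % d : ℕ) : ℝ) := by
        exact_mod_cast (Nat.div_add_mod N d).symm
      nlinarith [hmod, hdiv]
    have hmu : |(μ d : ℝ)| ≤ 1 := by
      have := @ArithmeticFunction.abs_moebius_le_one d
      exact_mod_cast this
    rw [abs_mul]
    have hf : |(N : ℝ) / d - ((N / d : ℕ) : ℝ)| ≤ 1 := by
      rw [abs_le]; constructor <;> linarith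
    calc |(μ d : ℝ)| * |(N : ℝ) / d - ((N / d : ℕ) : ℝ)| ≤ 1 * 1 :=
          mul_le_mul hmu hf (abs_nonneg _) zero_le_one
      _ = 1 := by ring
  -- d = 1 term vanishes
  have h1mem : (1 : ℕ) ∈ Icc 1 N := Finset.mem_Icc.2 ⟨le_refl 1, hN⟩
  have hsplit : ∑ d ∈ Icc 1 N, (μ d : ℝ) * ((N : ℝ) / d - ((N / d : ℕ) : ℝ))
      = ∑ d ∈ (Icc 1 N).erase 1, (μ d : ℝ) * ((N : ℝ) / d - ((N / d : ℕ) : ℝ)) := by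
    rw [← Finset.add_sum_erase _ _ h1mem]
    simp
  have hcard : ((Icc 1 N).erase 1).card = N - 1 := by
    rw [Finset.Icc_erase_left, Nat.card_Ioc]
  have hbound : |(N : ℝ) * S - 1| ≤ (N : ℝ) - 1 := by
    rw [key, hsplit]
    calc |∑ d ∈ (Icc 1 N).erase 1, (μ d : ℝ) * ((N : ℝ) / d - ((N / d : ℕ) : ℝ))|
        ≤ ∑ d ∈ (Icc 1 N).erase 1, |(μ d : ℝ) * ((N : ℝ) / d - ((N / d : ℕ) : ℝ))| :=
          Finset.abs_sum_le_sum_abs _ _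
      _ ≤ ∑ _d ∈ (Icc 1 N).erase 1, (1 : ℝ) :=
          Finset.sum_le_sum fun d hd => hfrac d (Finset.mem_of_mem_erase hd)
      _ = (N : ℝ) - 1 := by
          rw [Finset.sum_const, hcard, nsmul_eq_mul]
          have : (1 : ℕ) ≤ N := hN
          push_cast [Nat.cast_sub this]
          ring
  have hN1 : (1 : ℝ) ≤ N := by exact_mod_cast hN
  rw [abs_le] at hbound ⊢
  constructor
  · nlinarith [hbound.1]
  · nlinarith [hbound.2]

end Aux

theorem stmt_14 (x : ℝ) (hx : 1 ≤ x) :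
    |∑ d ∈ Finset.Icc 1 ⌊x⌋₊, (ArithmeticFunction.moebius d : ℝ) / d| ≤ 1 := by
  exact key_real ⌊x⌋₊ (Nat.le_floor (by exact_mod_cast hx))
end
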